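/- arXiv:2510.16298 — 5 statements merged into one kernel-verified Lean document; each statement's English description precedes it below -/
import Mathlib

section
/- Double robustness in the propensity direction: if the outcome regressions are correctly specified (η2 = η2*, η1 = η1*) but the propensity models π1, π2 are arbitrary measurable functions bounded away from 0, then E[S1 + S2] = 0, where S2 = d(A1,A2)/(π1(A1,Z1)π2(A1,A2,Z1,Z2)) (Y − η2*(A1,A2,Z1,Z2)) and S1 = Σ_{a2} d(A1,a2)/π1(A1,Z1) (η2*(A1,a2,Z1,Z2) − η1*(A1,a2,Z1)). -/
open MeasureTheory Filter

/-- Indicator (as a real-valued function) of the event `A = a`. -/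
noncomputable def ind {Ω : Type*} (A : Ω → Bool) (a : Bool) : Ω → ℝ :=
  fun ω => if A ω = a then 1 else 0

lemma ind_meas {Ω : Type*} [MeasurableSpace Ω] {A : Ω → Bool} (hA : Measurable A) (b : Bool) :
    Measurable (ind A b) := by
  have h : MeasurableSet {ω | A ω = b} := hA (MeasurableSet.singleton b)
  exact Measurable.ite h measurable_const measurable_const

lemma ind_abs_le {Ω : Type*} (A : Ω → Bool) (b : Bool) (ω : Ω) : |ind A b ω| ≤ 1 := by
  unfold ind; split <;> simp

lemma abs_mul_le_of_le_one {a b c : ℝ} (h1 : |a| ≤ 1) (h2 : |b| ≤ c) : |a * b| ≤ c := by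
  rw [abs_mul]
  calc |a| * |b| ≤ 1 * c := mul_le_mul h1 h2 (abs_nonneg _) zero_le_one
    _ = c := one_mul c

lemma integrable_of_bdd {Ω : Type*} [MeasurableSpace Ω] {μ : Measure Ω} [IsFiniteMeasure μ]
    {f : Ω → ℝ} (hf : Measurable f) (K : ℝ) (hK : ∀ ω, |f ω| ≤ K) : Integrable f μ :=
  (integrable_const K).mono' hf.aestronglyMeasurable
    (Eventually.of_forall fun ω => by simpa [Real.norm_eq_abs] using hK ω)

lemma integral_mul_eq_zero_of_condexp_zero {Ω : Type*} {m : MeasurableSpace Ω}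
    [m0 : MeasurableSpace Ω] (hm : m ≤ m0) (μ : Measure Ω) [IsProbabilityMeasure μ]
    {f g : Ω → ℝ} (hg : Measurable[m] g) {B : ℝ} (hgB : ∀ ω, |g ω| ≤ B)
    (hf : Integrable f μ) (h0 : μ[f|m] =ᵐ[μ] 0) :
    ∫ ω, g ω * f ω ∂μ = 0 := by
  have hgs : StronglyMeasurable[m] g := hg.stronglyMeasurable
  have hgm0 : AEStronglyMeasurable g μ :=
    (hg.mono hm le_rfl).aestronglyMeasurable
  have hgf : Integrable (fun ω => g ω * f ω) μ :=
    hf.bdd_mul hgm0 (c := B) (Eventually.of_forall fun ω => by simpa [Real.norm_eq_abs] using hgB ω)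
  have h1 : μ[fun ω => g ω * f ω|m] =ᵐ[μ] g * μ[f|m] :=
    condExp_mul_of_stronglyMeasurable_left hgs hgf hf
  have h2 : μ[fun ω => g ω * f ω|m] =ᵐ[μ] 0 := by
    filter_upwards [h1, h0] with ω ha hb
    simp [ha, hb]
  calc ∫ ω, g ω * f ω ∂μ = ∫ ω, (μ[fun ω => g ω * f ω|m]) ω ∂μ := (integral_condExp hm).symm
    _ = 0 := by rw [integral_congr_ae h2]; simp

lemma condexp_resid_zero {Ω : Type*} {m : MeasurableSpace Ω} [m0 : MeasurableSpace Ω]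
    (hm : m ≤ m0) (μ : Measure Ω) [IsProbabilityMeasure μ]
    {q f e P : Ω → ℝ}
    (hq : Measurable q) (hqbd : ∀ ω, |q ω| ≤ 1)
    (hintqf : Integrable (fun ω => q ω * f ω) μ)
    (he : Measurable[m] e) {C : ℝ} (hebd : ∀ ω, |e ω| ≤ C)
    (hreg : (fun ω => P ω * e ω) =ᵐ[μ] μ[fun ω => q ω * f ω|m])
    (hP : P =ᵐ[μ] μ[q|m]) :
    μ[fun ω => q ω * (f ω - e ω)|m] =ᵐ[μ] 0 := by
  have hintq : Integrable q μ := integrable_of_bdd hq 1 hqbd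
  have hintqe : Integrable (fun ω => q ω * e ω) μ :=
    integrable_of_bdd (hq.mul (he.mono hm le_rfl)) C
      (fun ω => abs_mul_le_of_le_one (hqbd ω) (hebd ω))
  have heq : (fun ω => q ω * (f ω - e ω))
      = (fun ω => q ω * f ω) - (fun ω => q ω * e ω) := by
    funext ω; simp [mul_sub]
  rw [heq]
  have hsub := condExp_sub (m := m) (μ := μ) hintqf hintqe
  have hmul : (fun ω => q ω * e ω) = e * q := funext fun ω => mul_comm _ _
  have hintqe' : Integrable (e * q) μ := hmul ▸ hintqe
  have hpull : μ[e * q|m] =ᵐ[μ] e * μ[q|m] :=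
    condExp_mul_of_stronglyMeasurable_left he.stronglyMeasurable hintqe' hintq
  have h2 : μ[fun ω => q ω * e ω|m] =ᵐ[μ] fun ω => e ω * P ω := by
    rw [hmul]
    refine hpull.trans ?_
    filter_upwards [hP] with ω hω
    simp [← hω]
  refine hsub.trans ?_
  filter_upwards [hreg, h2] with ω h1 h2'
  simp only [Pi.sub_apply, Pi.zero_apply, ← h1, h2']
  ring

/-- Double robustness in the propensity direction: with correctly specified outcome
regressions `η2* , η1*` but arbitrary measurable propensity models `π1, π2` taking
values in `[ε,1]`, the doubly robust terms satisfy `E[S1 + S2] = 0`. -/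
theorem dr_robust_propensity_direction
    {Ω 𝒵₁ 𝒵₂ : Type*} [MeasurableSpace Ω]
    [MeasurableSpace 𝒵₁] [MeasurableSpace 𝒵₂]
    (μ : Measure Ω) [IsProbabilityMeasure μ]
    (Z1 : Ω → 𝒵₁) (Z2 : Ω → 𝒵₂) (A1 A2 : Ω → Bool) (Y : Ω → ℝ)
    (hZ1 : Measurable Z1) (hZ2 : Measurable Z2)
    (hA1 : Measurable A1) (hA2 : Measurable A2)
    (hYint : Integrable Y μ)
    (d : Bool → Bool → ℝ)
    -- true propensity scores: π1s b1 = P(A1=b1|Z1), π2s b1 b2 = P(A2=b2|A1=b1,Z1,Z2),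
    -- πJ b1 = P(A1=b1|Z1,Z2)
    (π1s πJ : Bool → Ω → ℝ) (π2s : Bool → Bool → Ω → ℝ) 
    (hπ1s : ∀ b1, π1s b1 =ᵐ[μ] μ[ind A1 b1 | MeasurableSpace.comap Z1 inferInstance])
    (hπJ : ∀ b1, πJ b1 =ᵐ[μ]
      μ[ind A1 b1 | MeasurableSpace.comap (fun ω => (Z1 ω, Z2 ω)) inferInstance])
    (hπ2s : ∀ b1 b2, (fun ω => πJ b1 ω * π2s b1 b2 ω) =ᵐ[μ]
      μ[fun ω => ind A1 b1 ω * ind A2 b2 ω |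
        MeasurableSpace.comap (fun ω => (Z1 ω, Z2 ω)) inferInstance])
    (hpos1 : ∀ b1, ∀ᵐ ω ∂μ, 0 < π1s b1 ω)
    (hpos2 : ∀ b1 b2, ∀ᵐ ω ∂μ, 0 < π2s b1 b2 ω)
    (hposJ : ∀ b1, ∀ᵐ ω ∂μ, 0 < πJ b1 ω)
    -- true outcome regression η2s b1 b2 = E[Y | A1=b1, A2=b2, Z1, Z2]:
    (η2s : Bool → Bool → Ω → ℝ)
    (hη2meas : ∀ b1 b2,
      Measurable[MeasurableSpace.comap (fun ω => (Z1 ω, Z2 ω)) inferInstance] (η2s b1 b2))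
    (hη2 : ∀ b1 b2, (fun ω => πJ b1 ω * π2s b1 b2 ω * η2s b1 b2 ω) =ᵐ[μ]
      μ[fun ω => ind A1 b1 ω * ind A2 b2 ω * Y ω |
        MeasurableSpace.comap (fun ω => (Z1 ω, Z2 ω)) inferInstance])
    -- true iterated mean η1s b1 b2 = E[η2s b1 b2 | A1=b1, Z1]:
    (η1s : Bool → Bool → Ω → ℝ)
    (hη1meas : ∀ b1 b2, Measurable[MeasurableSpace.comap Z1 inferInstance] (η1s b1 b2))
    (hη1 : ∀ b1 b2, (fun ω => π1s b1 ω * η1s b1 b2 ω) =ᵐ[μ]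
      μ[fun ω => ind A1 b1 ω * η2s b1 b2 ω | MeasurableSpace.comap Z1 inferInstance])
    (C : ℝ) (hη2bd : ∀ b1 b2 ω, |η2s b1 b2 ω| ≤ C) (hη1bd : ∀ b1 b2 ω, |η1s b1 b2 ω| ≤ C)
    -- arbitrary working propensity models, bounded in [ε,1]:
    (π1a : Bool → Ω → ℝ) (π2a : Bool → Bool → Ω → ℝ) (ε : ℝ) (hε : 0 < ε)
    (hπ1ameas : ∀ b1, Measurable[MeasurableSpace.comap Z1 inferInstance] (π1a b1))
    (hπ2ameas : ∀ b1 b2,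
      Measurable[MeasurableSpace.comap (fun ω => (Z1 ω, Z2 ω)) inferInstance] (π2a b1 b2))
    (hπ1abd : ∀ b1 ω, π1a b1 ω ∈ Set.Icc ε 1)
    (hπ2abd : ∀ b1 b2 ω, π2a b1 b2 ω ∈ Set.Icc ε 1) :
    ∫ ω, ((∑ b2 : Bool, d (A1 ω) b2 / π1a (A1 ω) ω * (η2s (A1 ω) b2 ω - η1s (A1 ω) b2 ω)) + (d (A1 ω) (A2 ω) / (π1a (A1 ω) ω * π2a (A1 ω) (A2 ω) ω) * (Y ω - η2s (A1 ω) (A2 ω) ω))) ∂μ = 0 := by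
  classical
  have hM1 : MeasurableSpace.comap Z1 inferInstance ≤ ‹MeasurableSpace Ω› := hZ1.comap_le
  have hM2 : MeasurableSpace.comap (fun ω => (Z1 ω, Z2 ω)) inferInstance
      ≤ ‹MeasurableSpace Ω› := (hZ1.prodMk hZ2).comap_le
  have hM12 : MeasurableSpace.comap Z1 inferInstance
      ≤ MeasurableSpace.comap (fun ω => (Z1 ω, Z2 ω)) inferInstance := by
    have e1 : (MeasurableSpace.comap Prod.fst inferInstance).comap (fun ω => (Z1 ω, Z2 ω))
        = MeasurableSpace.comap Z1 inferInstance :=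
      MeasurableSpace.comap_comp (f := Prod.fst) (g := fun ω => (Z1 ω, Z2 ω))
    rw [← e1]
    exact MeasurableSpace.comap_mono measurable_fst.comap_le
  -- measurability at the ambient σ-algebra
  have hη2m : ∀ b1 b2, Measurable (η2s b1 b2) := fun b1 b2 => (hη2meas b1 b2).mono hM2 le_rfl
  have hη1m : ∀ b1 b2, Measurable (η1s b1 b2) := fun b1 b2 => (hη1meas b1 b2).mono hM1 le_rfl
  -- the conditional expectations of the residual terms vanish
  have hcond1 : ∀ b1 b2 : Bool,
      μ[fun ω => ind A1 b1 ω * (η2s b1 b2 ω - η1s b1 b2 ω) |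
        MeasurableSpace.comap Z1 inferInstance] =ᵐ[μ] 0 := by
    intro b1 b2
    refine condexp_resid_zero hM1 μ (ind_meas hA1 b1) (ind_abs_le A1 b1)
      (integrable_of_bdd ((ind_meas hA1 b1).mul (hη2m b1 b2)) C
        (fun ω => abs_mul_le_of_le_one (ind_abs_le A1 b1 ω) (hη2bd b1 b2 ω)))
      (hη1meas b1 b2) (hη1bd b1 b2) (hη1 b1 b2) (hπ1s b1)
  have hcond2 : ∀ b1 b2 : Bool,
      μ[fun ω => ind A1 b1 ω * ind A2 b2 ω * (Y ω - η2s b1 b2 ω) |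
        MeasurableSpace.comap (fun ω => (Z1 ω, Z2 ω)) inferInstance] =ᵐ[μ] 0 := by
    intro b1 b2
    refine condexp_resid_zero (q := fun ω => ind A1 b1 ω * ind A2 b2 ω) hM2 μ
      ((ind_meas hA1 b1).mul (ind_meas hA2 b2))
      (fun ω => abs_mul_le_of_le_one (ind_abs_le A1 b1 ω) (ind_abs_le A2 b2 ω))
      (hYint.bdd_mul ((ind_meas hA1 b1).mul (ind_meas hA2 b2)).aestronglyMeasurable
        (c := 1) (Eventually.of_forall fun ω => by
          rw [Real.norm_eq_abs]
          exact abs_mul_le_of_le_one (ind_abs_le A1 b1 ω) (ind_abs_le A2 b2 ω)))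
      (hη2meas b1 b2) (hη2bd b1 b2) (hη2 b1 b2) (hπ2s b1 b2)
  -- bounded weights
  have hg1meas : ∀ b1 b2 : Bool, Measurable[MeasurableSpace.comap Z1 inferInstance]
      (fun ω => d b1 b2 / π1a b1 ω) := fun b1 b2 => measurable_const.div (hπ1ameas b1)
  have hg2meas : ∀ b1 b2 : Bool,
      Measurable[MeasurableSpace.comap (fun ω => (Z1 ω, Z2 ω)) inferInstance]
      (fun ω => d b1 b2 / (π1a b1 ω * π2a b1 b2 ω)) := fun b1 b2 =>
    measurable_const.div (((hπ1ameas b1).mono hM12 le_rfl).mul (hπ2ameas b1 b2))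
  have hg1bd : ∀ (b1 b2 : Bool) ω, |d b1 b2 / π1a b1 ω| ≤ |d b1 b2| / ε := by
    intro b1 b2 ω
    have h1 : ε ≤ π1a b1 ω := (hπ1abd b1 ω).1
    have hp : 0 < π1a b1 ω := lt_of_lt_of_le hε h1
    rw [abs_div, abs_of_pos hp]
    exact div_le_div_of_nonneg_left (abs_nonneg _) hε h1
  have hg2bd : ∀ (b1 b2 : Bool) ω,
      |d b1 b2 / (π1a b1 ω * π2a b1 b2 ω)| ≤ |d b1 b2| / (ε * ε) := by
    intro b1 b2 ω
    have h1 : ε ≤ π1a b1 ω := (hπ1abd b1 ω).1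
    have h2 : ε ≤ π2a b1 b2 ω := (hπ2abd b1 b2 ω).1
    have hp : 0 < π1a b1 ω * π2a b1 b2 ω :=
      mul_pos (lt_of_lt_of_le hε h1) (lt_of_lt_of_le hε h2)
    rw [abs_div, abs_of_pos hp]
    exact div_le_div_of_nonneg_left (abs_nonneg _) (mul_pos hε hε)
      (mul_le_mul h1 h2 hε.le (hε.le.trans h1))
  -- integrability of the residual factors
  have hf1int : ∀ b1 b2 : Bool,
      Integrable (fun ω => ind A1 b1 ω * (η2s b1 b2 ω - η1s b1 b2 ω)) μ := by
    intro b1 b2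
    refine integrable_of_bdd ((ind_meas hA1 b1).mul ((hη2m b1 b2).sub (hη1m b1 b2))) (C + C)
      (fun ω => abs_mul_le_of_le_one (ind_abs_le A1 b1 ω) ?_)
    calc |η2s b1 b2 ω - η1s b1 b2 ω| ≤ |η2s b1 b2 ω| + |η1s b1 b2 ω| := abs_sub _ _
      _ ≤ C + C := add_le_add (hη2bd b1 b2 ω) (hη1bd b1 b2 ω)
  have hf2int : ∀ b1 b2 : Bool,
      Integrable (fun ω => ind A1 b1 ω * ind A2 b2 ω * (Y ω - η2s b1 b2 ω)) μ := by
    intro b1 b2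
    refine Integrable.bdd_mul ?_
      ((ind_meas hA1 b1).mul (ind_meas hA2 b2)).aestronglyMeasurable
      (c := 1) (Eventually.of_forall fun ω => by
        rw [Real.norm_eq_abs]
        exact abs_mul_le_of_le_one (ind_abs_le A1 b1 ω) (ind_abs_le A2 b2 ω))
    exact hYint.sub (integrable_of_bdd (hη2m b1 b2) C (hη2bd b1 b2))
  -- each summand has zero integral
  have key : ∀ p : Bool × Bool,
      Integrable (fun ω =>
        d p.1 p.2 / π1a p.1 ω * (ind A1 p.1 ω * (η2s p.1 p.2 ω - η1s p.1 p.2 ω)) +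
        d p.1 p.2 / (π1a p.1 ω * π2a p.1 p.2 ω) *
          (ind A1 p.1 ω * ind A2 p.2 ω * (Y ω - η2s p.1 p.2 ω))) μ ∧
      ∫ ω, (d p.1 p.2 / π1a p.1 ω * (ind A1 p.1 ω * (η2s p.1 p.2 ω - η1s p.1 p.2 ω)) +
        d p.1 p.2 / (π1a p.1 ω * π2a p.1 p.2 ω) *
          (ind A1 p.1 ω * ind A2 p.2 ω * (Y ω - η2s p.1 p.2 ω))) ∂μ = 0 := by
    rintro ⟨b1, b2⟩
    have int1 : Integrable (fun ω =>
        d b1 b2 / π1a b1 ω * (ind A1 b1 ω * (η2s b1 b2 ω - η1s b1 b2 ω))) μ :=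
      (hf1int b1 b2).bdd_mul
        (((hg1meas b1 b2).mono hM1 le_rfl).aestronglyMeasurable)
        (c := |d b1 b2| / ε) (Eventually.of_forall fun ω => by rw [Real.norm_eq_abs]; exact hg1bd b1 b2 ω)
    have int2 : Integrable (fun ω =>
        d b1 b2 / (π1a b1 ω * π2a b1 b2 ω) *
          (ind A1 b1 ω * ind A2 b2 ω * (Y ω - η2s b1 b2 ω))) μ :=
      (hf2int b1 b2).bdd_mul
        (((hg2meas b1 b2).mono hM2 le_rfl).aestronglyMeasurable)
        (c := |d b1 b2| / (ε * ε)) (Eventually.of_forall fun ω => by rw [Real.norm_eq_abs]; exact hg2bd b1 b2 ω)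
    refine ⟨int1.add int2, ?_⟩
    rw [integral_add int1 int2]
    have z1 : ∫ ω, d b1 b2 / π1a b1 ω * (ind A1 b1 ω * (η2s b1 b2 ω - η1s b1 b2 ω)) ∂μ = 0 :=
      integral_mul_eq_zero_of_condexp_zero hM1 μ (hg1meas b1 b2) (hg1bd b1 b2)
        (hf1int b1 b2) (hcond1 b1 b2)
    have z2 : ∫ ω, d b1 b2 / (π1a b1 ω * π2a b1 b2 ω) *
        (ind A1 b1 ω * ind A2 b2 ω * (Y ω - η2s b1 b2 ω)) ∂μ = 0 :=
      integral_mul_eq_zero_of_condexp_zero hM2 μ (hg2meas b1 b2) (hg2bd b1 b2)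
        (hf2int b1 b2) (hcond2 b1 b2)
    rw [z1, z2, add_zero]
  -- pointwise decomposition of the integrand
  have hpt : ∀ ω, ((∑ b2 : Bool, d (A1 ω) b2 / π1a (A1 ω) ω *
        (η2s (A1 ω) b2 ω - η1s (A1 ω) b2 ω)) +
      (d (A1 ω) (A2 ω) / (π1a (A1 ω) ω * π2a (A1 ω) (A2 ω) ω) *
        (Y ω - η2s (A1 ω) (A2 ω) ω)))
      = ∑ p : Bool × Bool,
        (d p.1 p.2 / π1a p.1 ω * (ind A1 p.1 ω * (η2s p.1 p.2 ω - η1s p.1 p.2 ω)) +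
         d p.1 p.2 / (π1a p.1 ω * π2a p.1 p.2 ω) *
           (ind A1 p.1 ω * ind A2 p.2 ω * (Y ω - η2s p.1 p.2 ω))) := by
    intro ω
    cases h1 : A1 ω <;> cases h2 : A2 ω <;>
      simp [ind, h1, h2, Fintype.sum_prod_type, Fintype.sum_bool] <;> ring
  calc ∫ ω, ((∑ b2 : Bool, d (A1 ω) b2 / π1a (A1 ω) ω *
        (η2s (A1 ω) b2 ω - η1s (A1 ω) b2 ω)) +
      (d (A1 ω) (A2 ω) / (π1a (A1 ω) ω * π2a (A1 ω) (A2 ω) ω) *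
        (Y ω - η2s (A1 ω) (A2 ω) ω))) ∂μ
      = ∫ ω, ∑ p : Bool × Bool,
          (d p.1 p.2 / π1a p.1 ω * (ind A1 p.1 ω * (η2s p.1 p.2 ω - η1s p.1 p.2 ω)) +
           d p.1 p.2 / (π1a p.1 ω * π2a p.1 p.2 ω) *
             (ind A1 p.1 ω * ind A2 p.2 ω * (Y ω - η2s p.1 p.2 ω))) ∂μ :=
        integral_congr_ae (Eventually.of_forall hpt)
    _ = ∑ p : Bool × Bool, ∫ ω,
          (d p.1 p.2 / π1a p.1 ω * (ind A1 p.1 ω * (η2s p.1 p.2 ω - η1s p.1 p.2 ω)) +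
           d p.1 p.2 / (π1a p.1 ω * π2a p.1 p.2 ω) *
             (ind A1 p.1 ω * ind A2 p.2 ω * (Y ω - η2s p.1 p.2 ω))) ∂μ :=
        integral_finset_sum _ (fun p _ => (key p).1)
    _ = 0 := Finset.sum_eq_zero fun p _ => (key p).2
end

section
/- Double robustness in the outcome direction: if the propensity scores are correctly specified (π1 = π1*, π2 = π2*) but the outcome functions η1, η2 are arbitrary bounded measurable functions, then E[S0 + S1 + S2] = E[ Σ_{a1,a2} d(a1,a2) ( η1*(a1,a2,Z1) − τ(a1,a2;θ) ) ], i.e., the sum of the doubly robust score terms recovers the correct population moment regardless of the misspecification of η1, η2. -/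
open MeasureTheory Filter

section aux
variable {Ω : Type*} {m m0 : MeasurableSpace Ω} {μ : Measure Ω}

/-- Pull-out property at the level of integrals. -/
lemma integral_mul_condexp' (hm : m ≤ m0) [IsFiniteMeasure μ]
    {f g : Ω → ℝ} (hf : StronglyMeasurable[m] f) (hg : Integrable g μ)
    (hfg : Integrable (fun ω => f ω * g ω) μ) :
    ∫ ω, f ω * g ω ∂μ = ∫ ω, f ω * (μ[g|m]) ω ∂μ := by
  have h := condExp_mul_of_stronglyMeasurable_left hf (show Integrable (f * g) μ from hfg) hg
  calc ∫ ω, f ω * g ω ∂μ = ∫ ω, (μ[f * g|m]) ω ∂μ := (integral_condExp hm).symm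
    _ = ∫ ω, f ω * (μ[g|m]) ω ∂μ := by
        refine integral_congr_ae (h.mono fun ω hω => ?_)
        simpa using hω

/-- Integrability transfer through conditional expectation for nonnegative factors. -/
lemma integrable_mul_of_integrable_condexp_mul (hm : m ≤ m0) [IsProbabilityMeasure μ]
    {g h : Ω → ℝ} (hg : Integrable g μ) (hg0 : 0 ≤ᵐ[μ] g)
    (hh : StronglyMeasurable[m] h) (hh0 : ∀ ω, 0 ≤ h ω)
    (hint : Integrable (fun ω => (μ[g|m]) ω * h ω) μ) :
    Integrable (fun ω => g ω * h ω) μ := by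
  have hhm : AEStronglyMeasurable h μ := (hh.mono hm).aestronglyMeasurable
  have haesm : AEStronglyMeasurable (fun ω => g ω * h ω) μ := hg.1.mul hhm
  have hhnsm : ∀ n : ℕ, StronglyMeasurable[m] (fun ω => min (h ω) (n : ℝ)) :=
    fun n => (hh.measurable.min measurable_const).stronglyMeasurable
  have hghn_int : ∀ n : ℕ, Integrable (fun ω => g ω * min (h ω) (n : ℝ)) μ := by
    intro n
    refine Integrable.mono' (hg.norm.const_mul (n : ℝ))
      (hg.1.mul ((hhnsm n).mono hm).aestronglyMeasurable) (ae_of_all _ fun ω => ?_)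
    have h1 : (0:ℝ) ≤ min (h ω) n := le_min (hh0 ω) (Nat.cast_nonneg n)
    calc ‖g ω * min (h ω) (n:ℝ)‖ = ‖g ω‖ * ‖min (h ω) (n:ℝ)‖ := norm_mul _ _
      _ ≤ ‖g ω‖ * (n : ℝ) := by
          rw [Real.norm_eq_abs (min _ _), abs_of_nonneg h1]
          exact mul_le_mul_of_nonneg_left (min_le_right _ _) (norm_nonneg _)
      _ = (n:ℝ) * ‖g ω‖ := mul_comm _ _
  set M : ℝ := ∫ ω, (μ[g|m]) ω * h ω ∂μ with hM
  have hbound : ∀ n : ℕ, ∫ ω, g ω * min (h ω) (n:ℝ) ∂μ ≤ M := by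
    intro n
    have e0 : ∫ ω, g ω * min (h ω) (n:ℝ) ∂μ = ∫ ω, min (h ω) (n:ℝ) * g ω ∂μ :=
      integral_congr_ae (ae_of_all _ fun ω => mul_comm _ _)
    have e1 : ∫ ω, min (h ω) (n:ℝ) * g ω ∂μ = ∫ ω, min (h ω) (n:ℝ) * (μ[g|m]) ω ∂μ := by
      refine integral_mul_condexp' hm (hhnsm n) hg ?_
      exact (hghn_int n).congr (ae_of_all _ fun ω => mul_comm _ _)
    rw [e0, e1, hM]
    have hi1 : Integrable (fun ω => min (h ω) (n:ℝ) * (μ[g|m]) ω) μ := by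
      refine Integrable.bdd_mul integrable_condExp
        ((hhnsm n).mono hm).aestronglyMeasurable (c := (n:ℝ)) (ae_of_all _ fun ω => ?_)
      rw [Real.norm_eq_abs, abs_of_nonneg (le_min (hh0 ω) (Nat.cast_nonneg n))]
      exact min_le_right _ _
    have hi2 : Integrable (fun ω => (μ[g|m]) ω * h ω) μ := hint
    refine integral_mono_ae hi1 hi2 ?_
    filter_upwards [condExp_nonneg hg0] with ω hω
    rw [mul_comm ((μ[g|m]) ω) (h ω)]
    exact mul_le_mul_of_nonneg_right (min_le_left _ _) hω
  refine ⟨haesm, ?_⟩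
  have hnn : 0 ≤ᵐ[μ] fun ω => g ω * h ω := by
    filter_upwards [hg0] with ω hω; exact mul_nonneg hω (hh0 ω)
  rw [hasFiniteIntegral_iff_norm]
  have hkey : ∫⁻ ω, ENNReal.ofReal ‖g ω * h ω‖ ∂μ ≤ ENNReal.ofReal M := by
    have hcong : ∀ᵐ ω ∂μ, ENNReal.ofReal ‖g ω * h ω‖
        = ⨆ n : ℕ, ENNReal.ofReal (g ω * min (h ω) (n:ℝ)) := by
      filter_upwards [hg0] with ω hω
      rw [Real.norm_eq_abs, abs_of_nonneg (mul_nonneg hω (hh0 ω))]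
      refine le_antisymm ?_ (iSup_le fun n => ENNReal.ofReal_le_ofReal
        (mul_le_mul_of_nonneg_left (min_le_left _ _) hω))
      obtain ⟨n, hn'⟩ := exists_nat_ge (h ω)
      exact le_iSup_of_le n (le_of_eq (by rw [min_eq_left hn']))
    rw [lintegral_congr_ae hcong]
    have haem : ∀ n : ℕ, AEMeasurable (fun ω => ENNReal.ofReal (g ω * min (h ω) (n:ℝ))) μ :=
      fun n => ENNReal.measurable_ofReal.comp_aemeasurable
        (hg.1.aemeasurable.mul ((hhnsm n).mono hm).measurable.aemeasurable)
    have hmono : ∀ᵐ ω ∂μ, Monotone fun n : ℕ => ENNReal.ofReal (g ω * min (h ω) (n:ℝ)) := by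
      filter_upwards [hg0] with ω hω
      intro a b hab
      exact ENNReal.ofReal_le_ofReal (mul_le_mul_of_nonneg_left
        (min_le_min le_rfl (Nat.cast_le.2 hab)) hω)
    rw [lintegral_iSup' haem hmono]
    refine iSup_le fun n => ?_
    have hnn' : 0 ≤ᵐ[μ] fun ω => g ω * min (h ω) (n:ℝ) := by
      filter_upwards [hg0] with ω hω
      exact mul_nonneg hω (le_min (hh0 ω) (Nat.cast_nonneg n))
    rw [← ofReal_integral_eq_lintegral_ofReal (hghn_int n) hnn']
    exact ENNReal.ofReal_le_ofReal (hbound n)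
  exact lt_of_le_of_lt hkey ENNReal.ofReal_lt_top

end aux

theorem dr_aux {Ω : Type*} {m1 m2 : MeasurableSpace Ω} [mΩ : MeasurableSpace Ω]
    (μ : Measure Ω) [IsProbabilityMeasure μ]
    (hG1 : m1 ≤ mΩ) (hG2 : m2 ≤ mΩ) (hG12 : m1 ≤ m2)
    (A1 A2 : Ω → Bool) (Y : Ω → ℝ)
    (hA1 : Measurable A1) (hA2 : Measurable A2)
    (hYint : Integrable Y μ)
    (d : Bool → Bool → ℝ)
    (π1s πJ : Bool → Ω → ℝ) (π2s : Bool → Bool → Ω → ℝ)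
    (hπ1s : ∀ b1, π1s b1 =ᵐ[μ] μ[ind A1 b1 | m1])
    (hπJ : ∀ b1, πJ b1 =ᵐ[μ] μ[ind A1 b1 | m2])
    (hπ2s : ∀ b1 b2, (fun ω => πJ b1 ω * π2s b1 b2 ω) =ᵐ[μ]
      μ[fun ω => ind A1 b1 ω * ind A2 b2 ω | m2])
    (hpos1 : ∀ b1, ∀ᵐ ω ∂μ, 0 < π1s b1 ω)
    (hpos2 : ∀ b1 b2, ∀ᵐ ω ∂μ, 0 < π2s b1 b2 ω)
    (hposJ : ∀ b1, ∀ᵐ ω ∂μ, 0 < πJ b1 ω)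
    (η2s : Bool → Bool → Ω → ℝ)
    (hη2meas : ∀ b1 b2, Measurable[m2] (η2s b1 b2))
    (hη2 : ∀ b1 b2, (fun ω => πJ b1 ω * π2s b1 b2 ω * η2s b1 b2 ω) =ᵐ[μ]
      μ[fun ω => ind A1 b1 ω * ind A2 b2 ω * Y ω | m2])
    (η1s : Bool → Bool → Ω → ℝ)
    (hη1meas : ∀ b1 b2, Measurable[m1] (η1s b1 b2))
    (hη1 : ∀ b1 b2, (fun ω => π1s b1 ω * η1s b1 b2 ω) =ᵐ[μ]
      μ[fun ω => ind A1 b1 ω * η2s b1 b2 ω | m1])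
    (hη1int : ∀ b1 b2, Integrable (η1s b1 b2) μ)
    (τ : Bool → Bool → ℝ)
    (η1a η2a : Bool → Bool → Ω → ℝ) (C : ℝ)
    (hη1ameas : ∀ b1 b2, Measurable[m1] (η1a b1 b2))
    (hη2ameas : ∀ b1 b2, Measurable[m2] (η2a b1 b2))
    (hη1abd : ∀ b1 b2 ω, |η1a b1 b2 ω| ≤ C)
    (hη2abd : ∀ b1 b2 ω, |η2a b1 b2 ω| ≤ C)
    (hS2aint : Integrable (fun ω => d (A1 ω) (A2 ω) / (π1s (A1 ω) ω * π2s (A1 ω) (A2 ω) ω) * (Y ω - η2a (A1 ω) (A2 ω) ω)) μ)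
    (hS1aint : Integrable (fun ω => ∑ b2 : Bool, d (A1 ω) b2 / π1s (A1 ω) ω * (η2a (A1 ω) b2 ω - η1a (A1 ω) b2 ω)) μ) :
    ∫ ω, ((∑ b1 : Bool, ∑ b2 : Bool, d b1 b2 * (η1a b1 b2 ω - τ b1 b2)) + (∑ b2 : Bool, d (A1 ω) b2 / π1s (A1 ω) ω * (η2a (A1 ω) b2 ω - η1a (A1 ω) b2 ω)) + (d (A1 ω) (A2 ω) / (π1s (A1 ω) ω * π2s (A1 ω) (A2 ω) ω) * (Y ω - η2a (A1 ω) (A2 ω) ω))) ∂μ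
      = ∑ b1 : Bool, ∑ b2 : Bool, d b1 b2 * ((∫ ω, η1s b1 b2 ω ∂μ) - τ b1 b2) := by
  classical
  -- indicator basics
  have indm : ∀ (A : Ω → Bool) (b : Bool), Measurable A → Measurable (ind A b) := by
    intro A b hA
    exact Measurable.ite (hA (measurableSet_singleton b)) measurable_const measurable_const
  have hind0 : ∀ (A : Ω → Bool) (b : Bool) (ω : Ω), 0 ≤ ind A b ω := by
    intro A b ω; by_cases h : A ω = b <;> simp [ind, h]
  have hind1 : ∀ (A : Ω → Bool) (b : Bool) (ω : Ω), ind A b ω ≤ 1 := by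
    intro A b ω; by_cases h : A ω = b <;> simp [ind, h]
  have hindint : ∀ b1, Integrable (ind A1 b1) μ := by
    intro b1
    refine Integrable.mono' (integrable_const (1:ℝ))
      (indm A1 b1 hA1).aestronglyMeasurable (ae_of_all _ fun ω => ?_)
    rw [Real.norm_eq_abs, abs_of_nonneg (hind0 A1 b1 ω)]
    exact hind1 A1 b1 ω
  have hindind_bd : ∀ b1 b2 ω, ‖ind A1 b1 ω * ind A2 b2 ω‖ ≤ 1 := by
    intro b1 b2 ω
    by_cases h1 : A1 ω = b1 <;> by_cases h2 : A2 ω = b2 <;> simp [ind, h1, h2]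
  have hindindint : ∀ b1 b2, Integrable (fun ω => ind A1 b1 ω * ind A2 b2 ω) μ := by
    intro b1 b2
    refine Integrable.mono' (integrable_const (1:ℝ))
      ((indm A1 b1 hA1).mul (indm A2 b2 hA2)).aestronglyMeasurable
      (ae_of_all _ fun ω => hindind_bd b1 b2 ω)
  -- integrability of the working models
  have hη1aI : ∀ b1 b2, Integrable (η1a b1 b2) μ := by
    intro b1 b2
    refine Integrable.mono' (integrable_const C)
      (((hη1ameas b1 b2).mono hG1 le_rfl)).aestronglyMeasurable (ae_of_all _ fun ω => ?_)
    rw [Real.norm_eq_abs]; exact hη1abd b1 b2 ω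
  have hη2aI : ∀ b1 b2, Integrable (η2a b1 b2) μ := by
    intro b1 b2
    refine Integrable.mono' (integrable_const C)
      (((hη2ameas b1 b2).mono hG2 le_rfl)).aestronglyMeasurable (ae_of_all _ fun ω => ?_)
    rw [Real.norm_eq_abs]; exact hη2abd b1 b2 ω
  -- positivity of the conditional-expectation versions
  have hp1pos : ∀ b1, ∀ᵐ ω ∂μ, 0 < (μ[ind A1 b1|m1]) ω := by
    intro b1
    filter_upwards [hπ1s b1, hpos1 b1] with ω e h
    rw [← e]; exact h
  have hqpos : ∀ b1, ∀ᵐ ω ∂μ, 0 < (μ[ind A1 b1|m2]) ω := by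
    intro b1
    filter_upwards [hπJ b1, hposJ b1] with ω e h
    rw [← e]; exact h
  have hrpos : ∀ b1 b2, ∀ᵐ ω ∂μ, 0 < (μ[fun ω => ind A1 b1 ω * ind A2 b2 ω|m2]) ω := by
    intro b1 b2
    filter_upwards [hπ2s b1 b2, hposJ b1, hpos2 b1 b2] with ω e hJ h2
    rw [← e]; exact mul_pos hJ h2
  have hp1le : ∀ b1, ∀ᵐ ω ∂μ, (μ[ind A1 b1|m1]) ω ≤ 1 := by
    intro b1
    have h := condExp_mono (μ := μ) (m := m1) (hindint b1) (integrable_const (1:ℝ))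
      (ae_of_all _ fun ω => hind1 A1 b1 ω)
    filter_upwards [h] with ω hω
    rw [condExp_const hG1 (1:ℝ)] at hω
    exact hω
  -- a.e.-measurability of the propensity functions
  have hπ1aem : ∀ b1, AEMeasurable (π1s b1) μ := by
    intro b1
    exact ((stronglyMeasurable_condExp.mono hG1).measurable).aemeasurable.congr (hπ1s b1).symm
  have hπ2aem : ∀ b1 b2, AEMeasurable (π2s b1 b2) μ := by
    intro b1 b2
    have hmeas : Measurable (fun ω => (μ[fun ω => ind A1 b1 ω * ind A2 b2 ω|m2]) ω
        / (μ[ind A1 b1|m2]) ω) :=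
      ((stronglyMeasurable_condExp.mono hG2).measurable).div
        ((stronglyMeasurable_condExp.mono hG2).measurable)
    refine hmeas.aemeasurable.congr ?_
    filter_upwards [hπJ b1, hπ2s b1 b2, hposJ b1] with ω e1 e2 h
    rw [← e2, ← e1]
    field_simp
  -- per-pair integrability of the S2 summands
  have hS2t : ∀ b1 b2, Integrable (fun ω => ind A1 b1 ω * ind A2 b2 ω
      * (d b1 b2 / (π1s b1 ω * π2s b1 b2 ω) * (Y ω - η2a b1 b2 ω))) μ := by
    intro b1 b2
    have h1 : AEMeasurable (fun ω => ind A1 b1 ω * ind A2 b2 ω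
        * (d b1 b2 / (π1s b1 ω * π2s b1 b2 ω) * (Y ω - η2a b1 b2 ω))) μ := by
      refine (((indm A1 b1 hA1).mul (indm A2 b2 hA2)).aemeasurable).mul ?_
      exact (aemeasurable_const.div ((hπ1aem b1).mul (hπ2aem b1 b2))).mul
        (hYint.aemeasurable.sub ((hη2ameas b1 b2).mono hG2 le_rfl).aemeasurable)
    refine Integrable.mono hS2aint h1.aestronglyMeasurable (ae_of_all _ fun ω => ?_)
    by_cases e1 : A1 ω = b1
    · by_cases e2 : A2 ω = b2
      · have i1 : ind A1 b1 ω = 1 := by simp [ind, e1]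
        have i2 : ind A2 b2 ω = 1 := by simp [ind, e2]
        rw [i1, i2, ← e1, ← e2]
        simp
      · have i2 : ind A2 b2 ω = 0 := by simp [ind, e2]
        simp only [i2, mul_zero, zero_mul, norm_zero, Real.norm_eq_abs, abs_mul, abs_div]
        positivity
    · have i1 : ind A1 b1 ω = 0 := by simp [ind, e1]
      simp only [i1, mul_zero, zero_mul, norm_zero, Real.norm_eq_abs, abs_mul, abs_div]
      positivity
  -- integrability of ind / p1
  have hindinvint : ∀ b1, Integrable
      (fun ω => ind A1 b1 ω * max ((μ[ind A1 b1|m1]) ω)⁻¹ 0) μ := by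
    intro b1
    refine integrable_mul_of_integrable_condexp_mul hG1 (hindint b1)
      (ae_of_all _ (hind0 A1 b1)) ?_ (fun ω => le_max_right _ _) ?_
    · exact ((stronglyMeasurable_condExp.measurable.inv).max measurable_const).stronglyMeasurable
    · refine (integrable_const (1:ℝ)).congr ?_
      filter_upwards [hp1pos b1] with ω h
      rw [max_eq_left (inv_nonneg.mpr h.le), mul_inv_cancel₀ (ne_of_gt h)]
  -- per-pair integrability of the S1 summands
  have hS1t : ∀ b1 b2, Integrable (fun ω => ind A1 b1 ω
      * (d b1 b2 / π1s b1 ω * (η2a b1 b2 ω - η1a b1 b2 ω))) μ := by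
    intro b1 b2
    have haesm : AEMeasurable (fun ω => ind A1 b1 ω
        * (d b1 b2 / π1s b1 ω * (η2a b1 b2 ω - η1a b1 b2 ω))) μ :=
      (indm A1 b1 hA1).aemeasurable.mul ((aemeasurable_const.div (hπ1aem b1)).mul
        (((hη2ameas b1 b2).mono hG2 le_rfl).aemeasurable.sub
          ((hη1ameas b1 b2).mono hG1 le_rfl).aemeasurable))
    refine Integrable.mono' ((hindinvint b1).const_mul (|d b1 b2| * (C + C)))
      haesm.aestronglyMeasurable ?_
    filter_upwards [hπ1s b1, hpos1 b1] with ω e1 h1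
    have hp : 0 < (μ[ind A1 b1|m1]) ω := by rw [← e1]; exact h1
    have hmax : max ((μ[ind A1 b1|m1]) ω)⁻¹ 0 = ((μ[ind A1 b1|m1]) ω)⁻¹ :=
      max_eq_left (inv_nonneg.mpr hp.le)
    have h01 : ind A1 b1 ω = 0 ∨ ind A1 b1 ω = 1 := by
      by_cases h : A1 ω = b1 <;> simp [ind, h]
    rcases h01 with h0 | h0
    · rw [h0]
      simp only [zero_mul, norm_zero, mul_zero]
      positivity
    · rw [h0, e1, hmax]
      have hsub : ‖η2a b1 b2 ω - η1a b1 b2 ω‖ ≤ C + C := by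
        refine (norm_sub_le _ _).trans ?_
        rw [Real.norm_eq_abs, Real.norm_eq_abs]
        exact add_le_add (hη2abd b1 b2 ω) (hη1abd b1 b2 ω)
      rw [one_mul, norm_mul, Real.norm_eq_abs (d b1 b2 / _), abs_div,
        abs_of_pos hp, div_eq_mul_inv]
      calc |d b1 b2| * ((μ[ind A1 b1|m1]) ω)⁻¹ * ‖η2a b1 b2 ω - η1a b1 b2 ω‖
          ≤ |d b1 b2| * ((μ[ind A1 b1|m1]) ω)⁻¹ * (C + C) := by
            refine mul_le_mul_of_nonneg_left hsub ?_
            positivity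
        _ = |d b1 b2| * (C + C) * (1 * ((μ[ind A1 b1|m1]) ω)⁻¹) := by ring
  -- the per-pair identity
  have key : ∀ b1 b2, (∫ ω, ind A1 b1 ω * (d b1 b2 / π1s b1 ω * (η2a b1 b2 ω - η1a b1 b2 ω)) ∂μ)
      + (∫ ω, ind A1 b1 ω * ind A2 b2 ω
          * (d b1 b2 / (π1s b1 ω * π2s b1 b2 ω) * (Y ω - η2a b1 b2 ω)) ∂μ)
      = d b1 b2 * ((∫ ω, η1s b1 b2 ω ∂μ) - ∫ ω, η1a b1 b2 ω ∂μ) := by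
    intro b1 b2
    by_cases hd : d b1 b2 = 0
    · simp [hd]
    -- strongly measurable versions
    have hp1sm : StronglyMeasurable[m1] (μ[ind A1 b1|m1]) := stronglyMeasurable_condExp
    have hqsm : StronglyMeasurable[m2] (μ[ind A1 b1|m2]) := stronglyMeasurable_condExp
    have hrsm : StronglyMeasurable[m2] (μ[fun ω => ind A1 b1 ω * ind A2 b2 ω|m2]) :=
      stronglyMeasurable_condExp
    have hη2sm : Measurable (η2s b1 b2) := (hη2meas b1 b2).mono hG2 le_rfl
    have hη2am : Measurable (η2a b1 b2) := (hη2ameas b1 b2).mono hG2 le_rfl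
    have hη1am : Measurable (η1a b1 b2) := (hη1ameas b1 b2).mono hG1 le_rfl
    ---- Step A : the S2 integral
    have hg2int : Integrable (fun ω => ind A1 b1 ω * ind A2 b2 ω * (Y ω - η2a b1 b2 ω)) μ := by
      refine Integrable.bdd_mul (hYint.sub (hη2aI b1 b2))
        ((indm A1 b1 hA1).mul (indm A2 b2 hA2)).aestronglyMeasurable (c := 1) (ae_of_all _ (hindind_bd b1 b2))
    have hfsm : StronglyMeasurable[m2] (fun ω => ((μ[ind A1 b1|m1]) ω)⁻¹ * (μ[ind A1 b1|m2]) ω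
        * ((μ[fun ω => ind A1 b1 ω * ind A2 b2 ω|m2]) ω)⁻¹ * d b1 b2) := by
      apply Measurable.stronglyMeasurable
      exact ((((hp1sm.mono hG12).measurable.inv.mul hqsm.measurable).mul
        hrsm.measurable.inv).mul measurable_const)
    have hfg2eq : (fun ω => (((μ[ind A1 b1|m1]) ω)⁻¹ * (μ[ind A1 b1|m2]) ω
          * ((μ[fun ω => ind A1 b1 ω * ind A2 b2 ω|m2]) ω)⁻¹ * d b1 b2)
          * (ind A1 b1 ω * ind A2 b2 ω * (Y ω - η2a b1 b2 ω)))
        =ᵐ[μ] (fun ω => ind A1 b1 ω * ind A2 b2 ω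
          * (d b1 b2 / (π1s b1 ω * π2s b1 b2 ω) * (Y ω - η2a b1 b2 ω))) := by
      filter_upwards [hπ1s b1, hπJ b1, hπ2s b1 b2, hpos1 b1, hposJ b1, hpos2 b1 b2]
        with ω e1 e2 e3 c1 cJ c2
      rw [← e1, ← e2, ← e3]
      field_simp
    have hfg2int : Integrable (fun ω => (((μ[ind A1 b1|m1]) ω)⁻¹ * (μ[ind A1 b1|m2]) ω
        * ((μ[fun ω => ind A1 b1 ω * ind A2 b2 ω|m2]) ω)⁻¹ * d b1 b2)
        * (ind A1 b1 ω * ind A2 b2 ω * (Y ω - η2a b1 b2 ω))) μ :=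
      (hS2t b1 b2).congr hfg2eq.symm
    have stepA1 := integral_mul_condexp' hG2 hfsm hg2int hfg2int
    have hXint : Integrable (fun ω => ind A1 b1 ω * ind A2 b2 ω * Y ω) μ :=
      Integrable.bdd_mul hYint
        ((indm A1 b1 hA1).mul (indm A2 b2 hA2)).aestronglyMeasurable (c := 1) (ae_of_all _ (hindind_bd b1 b2))
    have hZint : Integrable (fun ω => η2a b1 b2 ω * (ind A1 b1 ω * ind A2 b2 ω)) μ :=
      Integrable.bdd_mul (hindindint b1 b2) hη2am.aestronglyMeasurable
        (c := C) (ae_of_all _ fun ω => by rw [Real.norm_eq_abs]; exact hη2abd b1 b2 ω)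
    have hcond2 : μ[fun ω => ind A1 b1 ω * ind A2 b2 ω * (Y ω - η2a b1 b2 ω)|m2]
        =ᵐ[μ] fun ω => (μ[fun ω => ind A1 b1 ω * ind A2 b2 ω|m2]) ω * η2s b1 b2 ω
          - η2a b1 b2 ω * (μ[fun ω => ind A1 b1 ω * ind A2 b2 ω|m2]) ω := by
      have e : (fun ω => ind A1 b1 ω * ind A2 b2 ω * (Y ω - η2a b1 b2 ω))
          = (fun ω => ind A1 b1 ω * ind A2 b2 ω * Y ω)
            - (fun ω => η2a b1 b2 ω * (ind A1 b1 ω * ind A2 b2 ω)) := by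
        funext ω; simp only [Pi.sub_apply]; ring
      rw [e]
      refine (condExp_sub hXint hZint m2).trans ?_
      have h1 : μ[fun ω => ind A1 b1 ω * ind A2 b2 ω * Y ω|m2]
          =ᵐ[μ] fun ω => (μ[fun ω => ind A1 b1 ω * ind A2 b2 ω|m2]) ω * η2s b1 b2 ω := by
        refine (hη2 b1 b2).symm.trans ?_
        filter_upwards [hπ2s b1 b2] with ω e3
        rw [← e3]
      have h2 : μ[fun ω => η2a b1 b2 ω * (ind A1 b1 ω * ind A2 b2 ω)|m2]
          =ᵐ[μ] fun ω => η2a b1 b2 ω * (μ[fun ω => ind A1 b1 ω * ind A2 b2 ω|m2]) ω := by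
        have h := condExp_mul_of_stronglyMeasurable_left (μ := μ) (m := m2)
          ((hη2ameas b1 b2).stronglyMeasurable)
          (show Integrable (η2a b1 b2 * fun ω => ind A1 b1 ω * ind A2 b2 ω) μ from hZint)
          (hindindint b1 b2)
        exact h
      filter_upwards [h1, h2] with ω a1 a2
      simp only [Pi.sub_apply]
      rw [a1, a2]
    have hfmu_eq : (fun ω => (((μ[ind A1 b1|m1]) ω)⁻¹ * (μ[ind A1 b1|m2]) ω
          * ((μ[fun ω => ind A1 b1 ω * ind A2 b2 ω|m2]) ω)⁻¹ * d b1 b2)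
          * (μ[fun ω => ind A1 b1 ω * ind A2 b2 ω * (Y ω - η2a b1 b2 ω)|m2]) ω)
        =ᵐ[μ] fun ω => ((μ[ind A1 b1|m1]) ω)⁻¹ * ((μ[ind A1 b1|m2]) ω
          * (d b1 b2 * (η2s b1 b2 ω - η2a b1 b2 ω))) := by
      filter_upwards [hcond2, hrpos b1 b2] with ω h hr
      rw [h]
      calc ((μ[ind A1 b1|m1]) ω)⁻¹ * (μ[ind A1 b1|m2]) ω
            * ((μ[fun ω => ind A1 b1 ω * ind A2 b2 ω|m2]) ω)⁻¹ * d b1 b2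
            * ((μ[fun ω => ind A1 b1 ω * ind A2 b2 ω|m2]) ω * η2s b1 b2 ω
              - η2a b1 b2 ω * (μ[fun ω => ind A1 b1 ω * ind A2 b2 ω|m2]) ω)
          = (((μ[fun ω => ind A1 b1 ω * ind A2 b2 ω|m2]) ω)⁻¹
              * (μ[fun ω => ind A1 b1 ω * ind A2 b2 ω|m2]) ω)
            * (((μ[ind A1 b1|m1]) ω)⁻¹ * ((μ[ind A1 b1|m2]) ω
              * (d b1 b2 * (η2s b1 b2 ω - η2a b1 b2 ω)))) := by ring
        _ = ((μ[ind A1 b1|m1]) ω)⁻¹ * ((μ[ind A1 b1|m2]) ω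
              * (d b1 b2 * (η2s b1 b2 ω - η2a b1 b2 ω))) := by
            rw [inv_mul_cancel₀ hr.ne', one_mul]
    have stepA : (∫ ω, ind A1 b1 ω * ind A2 b2 ω
          * (d b1 b2 / (π1s b1 ω * π2s b1 b2 ω) * (Y ω - η2a b1 b2 ω)) ∂μ)
        = ∫ ω, ((μ[ind A1 b1|m1]) ω)⁻¹ * ((μ[ind A1 b1|m2]) ω
          * (d b1 b2 * (η2s b1 b2 ω - η2a b1 b2 ω))) ∂μ := by
      rw [← integral_congr_ae hfg2eq, stepA1]
      exact integral_congr_ae hfmu_eq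
    have hA2int : Integrable (fun ω => ((μ[ind A1 b1|m1]) ω)⁻¹ * ((μ[ind A1 b1|m2]) ω
        * (d b1 b2 * (η2s b1 b2 ω - η2a b1 b2 ω)))) μ := by
      refine (integrable_condExp (m := m2)).congr
        (((condExp_mul_of_stronglyMeasurable_left hfsm ?_ hg2int)).trans hfmu_eq)
      exact hfg2int
    ---- Step B : the S1 integral
    have hf1sm : StronglyMeasurable[m2] (fun ω => ((μ[ind A1 b1|m1]) ω)⁻¹
        * (d b1 b2 * (η2a b1 b2 ω - η1a b1 b2 ω))) := by
      apply Measurable.stronglyMeasurable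
      exact ((hp1sm.mono hG12).measurable.inv).mul (measurable_const.mul
        ((hη2ameas b1 b2).sub ((hη1ameas b1 b2).mono hG12 le_rfl)))
    have hf1geq : (fun ω => (((μ[ind A1 b1|m1]) ω)⁻¹
          * (d b1 b2 * (η2a b1 b2 ω - η1a b1 b2 ω))) * ind A1 b1 ω)
        =ᵐ[μ] (fun ω => ind A1 b1 ω * (d b1 b2 / π1s b1 ω * (η2a b1 b2 ω - η1a b1 b2 ω))) := by
      filter_upwards [hπ1s b1, hpos1 b1] with ω e1 c1
      rw [← e1]
      field_simp
    have hf1gint : Integrable (fun ω => (((μ[ind A1 b1|m1]) ω)⁻¹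
        * (d b1 b2 * (η2a b1 b2 ω - η1a b1 b2 ω))) * ind A1 b1 ω) μ :=
      (hS1t b1 b2).congr hf1geq.symm
    have stepB1 := integral_mul_condexp' hG2 hf1sm (hindint b1) hf1gint
    have stepB : (∫ ω, ind A1 b1 ω * (d b1 b2 / π1s b1 ω * (η2a b1 b2 ω - η1a b1 b2 ω)) ∂μ)
        = ∫ ω, ((μ[ind A1 b1|m1]) ω)⁻¹ * ((μ[ind A1 b1|m2]) ω
          * (d b1 b2 * (η2a b1 b2 ω - η1a b1 b2 ω))) ∂μ := by
      rw [← integral_congr_ae hf1geq, stepB1]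
      exact integral_congr_ae (ae_of_all _ fun ω => by ring)
    have hA1int : Integrable (fun ω => ((μ[ind A1 b1|m1]) ω)⁻¹ * ((μ[ind A1 b1|m2]) ω
        * (d b1 b2 * (η2a b1 b2 ω - η1a b1 b2 ω)))) μ := by
      refine (integrable_condExp (m := m2)).congr
        (((condExp_mul_of_stronglyMeasurable_left hf1sm ?_ (hindint b1))).trans
          (ae_of_all _ fun ω => by simp only [Pi.mul_apply]; ring))
      exact hf1gint
    ---- Step C : conditioning on m1
    have hKint : Integrable (fun ω => ((μ[ind A1 b1|m1]) ω)⁻¹ * ((μ[ind A1 b1|m2]) ω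
        * (d b1 b2 * (η2s b1 b2 ω - η1a b1 b2 ω)))) μ := by
      refine (hA1int.add hA2int).congr (ae_of_all _ fun ω => ?_)
      simp only [Pi.add_apply]
      ring
    have hg3int : Integrable (fun ω => (μ[ind A1 b1|m2]) ω
        * (d b1 b2 * (η2s b1 b2 ω - η1a b1 b2 ω))) μ := by
      refine Integrable.mono hKint ?_ ?_
      · exact ((hqsm.mono hG2).measurable.mul (measurable_const.mul
          (hη2sm.sub hη1am))).aestronglyMeasurable
      · filter_upwards [hp1pos b1, hp1le b1] with ω h0 h1
        have hinv : 1 ≤ ((μ[ind A1 b1|m1]) ω)⁻¹ := by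
          have e := mul_inv_cancel₀ (ne_of_gt h0)
          nlinarith [inv_pos.mpr h0]
        calc ‖(μ[ind A1 b1|m2]) ω * (d b1 b2 * (η2s b1 b2 ω - η1a b1 b2 ω))‖
            = 1 * ‖(μ[ind A1 b1|m2]) ω * (d b1 b2 * (η2s b1 b2 ω - η1a b1 b2 ω))‖ :=
              (one_mul _).symm
          _ ≤ ‖((μ[ind A1 b1|m1]) ω)⁻¹‖
              * ‖(μ[ind A1 b1|m2]) ω * (d b1 b2 * (η2s b1 b2 ω - η1a b1 b2 ω))‖ := by
              refine mul_le_mul_of_nonneg_right ?_ (norm_nonneg _)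
              rw [Real.norm_eq_abs]
              exact hinv.trans (le_abs_self _)
          _ = ‖((μ[ind A1 b1|m1]) ω)⁻¹ * ((μ[ind A1 b1|m2]) ω
              * (d b1 b2 * (η2s b1 b2 ω - η1a b1 b2 ω)))‖ := (norm_mul _ _).symm
    have hqcond : μ[μ[ind A1 b1|m2]|m1] =ᵐ[μ] μ[ind A1 b1|m1] := condExp_condExp_of_le hG12 hG2
    have hqη1a_int : Integrable (fun ω => η1a b1 b2 ω * (μ[ind A1 b1|m2]) ω) μ :=
      Integrable.bdd_mul integrable_condExp hη1am.aestronglyMeasurable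
        (c := C) (ae_of_all _ fun ω => by rw [Real.norm_eq_abs]; exact hη1abd b1 b2 ω)
    have hqη1a_int' : Integrable (fun ω => (μ[ind A1 b1|m2]) ω * η1a b1 b2 ω) μ :=
      hqη1a_int.congr (ae_of_all _ fun ω => mul_comm _ _)
    have hqη1a_cond : μ[fun ω => (μ[ind A1 b1|m2]) ω * η1a b1 b2 ω|m1]
        =ᵐ[μ] fun ω => (μ[ind A1 b1|m1]) ω * η1a b1 b2 ω := by
      have h := condExp_mul_of_stronglyMeasurable_left (μ := μ) (m := m1)
        ((hη1ameas b1 b2).stronglyMeasurable)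
        (show Integrable (η1a b1 b2 * μ[ind A1 b1|m2]) μ from hqη1a_int)
        (integrable_condExp)
      calc μ[fun ω => (μ[ind A1 b1|m2]) ω * η1a b1 b2 ω|m1]
          =ᵐ[μ] μ[η1a b1 b2 * μ[ind A1 b1|m2]|m1] :=
            condExp_congr_ae (ae_of_all _ fun ω => mul_comm _ _)
        _ =ᵐ[μ] η1a b1 b2 * μ[μ[ind A1 b1|m2]|m1] := h
        _ =ᵐ[μ] fun ω => (μ[ind A1 b1|m1]) ω * η1a b1 b2 ω := by
            filter_upwards [hqcond] with ω hω
            simp only [Pi.mul_apply]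
            rw [hω, mul_comm]
    have hqsub_int : Integrable (fun ω => (μ[ind A1 b1|m2]) ω
        * (η2s b1 b2 ω - η1a b1 b2 ω)) μ := by
      refine (hg3int.const_mul (d b1 b2)⁻¹).congr (ae_of_all _ fun ω => ?_)
      show (d b1 b2)⁻¹ * ((μ[ind A1 b1|m2]) ω * (d b1 b2 * (η2s b1 b2 ω - η1a b1 b2 ω)))
        = (μ[ind A1 b1|m2]) ω * (η2s b1 b2 ω - η1a b1 b2 ω)
      rw [show (d b1 b2)⁻¹ * ((μ[ind A1 b1|m2]) ω * (d b1 b2 * (η2s b1 b2 ω - η1a b1 b2 ω)))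
        = ((d b1 b2)⁻¹ * d b1 b2) * ((μ[ind A1 b1|m2]) ω * (η2s b1 b2 ω - η1a b1 b2 ω))
        from by ring, inv_mul_cancel₀ hd, one_mul]
    have hqη2s_int : Integrable (fun ω => (μ[ind A1 b1|m2]) ω * η2s b1 b2 ω) μ := by
      refine (hqsub_int.add hqη1a_int').congr (ae_of_all _ fun ω => ?_)
      simp only [Pi.add_apply]
      ring
    have habs_int : Integrable (fun ω => (μ[ind A1 b1|m2]) ω * |η2s b1 b2 ω|) μ := by
      refine Integrable.mono hqη2s_int
        ((hqsm.mono hG2).measurable.mul hη2sm.abs).aestronglyMeasurable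
        (ae_of_all _ fun ω => ?_)
      simp [Real.norm_eq_abs, abs_mul, abs_abs]
    have hη2s_sm : StronglyMeasurable[m2] (η2s b1 b2) := (hη2meas b1 b2).stronglyMeasurable
    have habs_sm : StronglyMeasurable[m2] (fun ω => |η2s b1 b2 ω|) :=
      continuous_abs.comp_stronglyMeasurable hη2s_sm
    have hindη2s_abs_int : Integrable (fun ω => ind A1 b1 ω * |η2s b1 b2 ω|) μ :=
      integrable_mul_of_integrable_condexp_mul hG2 (hindint b1) (ae_of_all _ (hind0 A1 b1))
        habs_sm (fun ω => abs_nonneg _) habs_int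
    have hindη2s_int : Integrable (fun ω => ind A1 b1 ω * η2s b1 b2 ω) μ := by
      refine Integrable.mono hindη2s_abs_int
        ((indm A1 b1 hA1).mul hη2sm).aestronglyMeasurable (ae_of_all _ fun ω => ?_)
      simp [Real.norm_eq_abs, abs_mul, abs_abs, abs_of_nonneg (hind0 A1 b1 ω)]
    have hcondind : μ[fun ω => η2s b1 b2 ω * ind A1 b1 ω|m2]
        =ᵐ[μ] fun ω => η2s b1 b2 ω * (μ[ind A1 b1|m2]) ω := by
      have h := condExp_mul_of_stronglyMeasurable_left (μ := μ) (m := m2)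
        ((hη2meas b1 b2).stronglyMeasurable)
        (show Integrable (η2s b1 b2 * ind A1 b1) μ from
          hindη2s_int.congr (ae_of_all _ fun ω => mul_comm _ _))
        (hindint b1)
      exact h
    have htower : μ[fun ω => (μ[ind A1 b1|m2]) ω * η2s b1 b2 ω|m1]
        =ᵐ[μ] fun ω => (μ[ind A1 b1|m1]) ω * η1s b1 b2 ω := by
      calc μ[fun ω => (μ[ind A1 b1|m2]) ω * η2s b1 b2 ω|m1]
          =ᵐ[μ] μ[fun ω => η2s b1 b2 ω * (μ[ind A1 b1|m2]) ω|m1] :=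
            condExp_congr_ae (ae_of_all _ fun ω => mul_comm _ _)
        _ =ᵐ[μ] μ[μ[fun ω => η2s b1 b2 ω * ind A1 b1 ω|m2]|m1] :=
            condExp_congr_ae hcondind.symm
        _ =ᵐ[μ] μ[fun ω => η2s b1 b2 ω * ind A1 b1 ω|m1] := condExp_condExp_of_le hG12 hG2
        _ =ᵐ[μ] μ[fun ω => ind A1 b1 ω * η2s b1 b2 ω|m1] :=
            condExp_congr_ae (ae_of_all _ fun ω => mul_comm _ _)
        _ =ᵐ[μ] fun ω => π1s b1 ω * η1s b1 b2 ω := (hη1 b1 b2).symm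
        _ =ᵐ[μ] fun ω => (μ[ind A1 b1|m1]) ω * η1s b1 b2 ω := by
            filter_upwards [hπ1s b1] with ω e
            rw [e]
    have hg3cond : μ[fun ω => (μ[ind A1 b1|m2]) ω
          * (d b1 b2 * (η2s b1 b2 ω - η1a b1 b2 ω))|m1]
        =ᵐ[μ] fun ω => d b1 b2 * ((μ[ind A1 b1|m1]) ω * η1s b1 b2 ω
          - (μ[ind A1 b1|m1]) ω * η1a b1 b2 ω) := by
      have e : (fun ω => (μ[ind A1 b1|m2]) ω * (d b1 b2 * (η2s b1 b2 ω - η1a b1 b2 ω)))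
          = (d b1 b2) • ((fun ω => (μ[ind A1 b1|m2]) ω * η2s b1 b2 ω)
            - fun ω => (μ[ind A1 b1|m2]) ω * η1a b1 b2 ω) := by
        funext ω
        simp only [Pi.smul_apply, Pi.sub_apply, smul_eq_mul]
        ring
      rw [e]
      refine (condExp_smul (d b1 b2) _ m1).trans ?_
      have hsub := condExp_sub (μ := μ) (m := m1) hqη2s_int hqη1a_int'
      filter_upwards [hsub, htower, hqη1a_cond] with ω h1 h2 h3
      simp only [Pi.smul_apply, Pi.sub_apply, smul_eq_mul] at h1 ⊢
      rw [h1, h2, h3]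
    have hKcond : μ[fun ω => ((μ[ind A1 b1|m1]) ω)⁻¹ * ((μ[ind A1 b1|m2]) ω
          * (d b1 b2 * (η2s b1 b2 ω - η1a b1 b2 ω)))|m1]
        =ᵐ[μ] fun ω => d b1 b2 * (η1s b1 b2 ω - η1a b1 b2 ω) := by
      have hpull := condExp_mul_of_stronglyMeasurable_left (μ := μ) (m := m1)
        (f := fun ω => ((μ[ind A1 b1|m1]) ω)⁻¹)
        (g := fun ω => (μ[ind A1 b1|m2]) ω * (d b1 b2 * (η2s b1 b2 ω - η1a b1 b2 ω)))
        (Measurable.stronglyMeasurable hp1sm.measurable.inv)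
        (show Integrable _ μ from hKint) hg3int
      refine hpull.trans ?_
      filter_upwards [hg3cond, hp1pos b1] with ω h1 h2
      simp only [Pi.mul_apply]
      rw [h1]
      field_simp
    have stepC : (∫ ω, ((μ[ind A1 b1|m1]) ω)⁻¹ * ((μ[ind A1 b1|m2]) ω
          * (d b1 b2 * (η2s b1 b2 ω - η1a b1 b2 ω))) ∂μ)
        = d b1 b2 * ((∫ ω, η1s b1 b2 ω ∂μ) - ∫ ω, η1a b1 b2 ω ∂μ) := by
      calc (∫ ω, ((μ[ind A1 b1|m1]) ω)⁻¹ * ((μ[ind A1 b1|m2]) ω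
            * (d b1 b2 * (η2s b1 b2 ω - η1a b1 b2 ω))) ∂μ)
          = ∫ ω, (μ[fun ω => ((μ[ind A1 b1|m1]) ω)⁻¹ * ((μ[ind A1 b1|m2]) ω
            * (d b1 b2 * (η2s b1 b2 ω - η1a b1 b2 ω)))|m1]) ω ∂μ := (integral_condExp hG1).symm
        _ = ∫ ω, d b1 b2 * (η1s b1 b2 ω - η1a b1 b2 ω) ∂μ := integral_congr_ae hKcond
        _ = d b1 b2 * ∫ ω, (η1s b1 b2 ω - η1a b1 b2 ω) ∂μ := integral_const_mul _ _
        _ = d b1 b2 * ((∫ ω, η1s b1 b2 ω ∂μ) - ∫ ω, η1a b1 b2 ω ∂μ) := by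
            rw [integral_sub (hη1int b1 b2) (hη1aI b1 b2)]
    rw [stepA, stepB, ← integral_add hA1int hA2int]
    rw [show (∫ ω, (((μ[ind A1 b1|m1]) ω)⁻¹ * ((μ[ind A1 b1|m2]) ω
        * (d b1 b2 * (η2a b1 b2 ω - η1a b1 b2 ω)))
        + ((μ[ind A1 b1|m1]) ω)⁻¹ * ((μ[ind A1 b1|m2]) ω
        * (d b1 b2 * (η2s b1 b2 ω - η2a b1 b2 ω)))) ∂μ)
      = ∫ ω, ((μ[ind A1 b1|m1]) ω)⁻¹ * ((μ[ind A1 b1|m2]) ω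
        * (d b1 b2 * (η2s b1 b2 ω - η1a b1 b2 ω))) ∂μ from
      integral_congr_ae (ae_of_all _ fun ω => by ring)]
    exact stepC
  -- pointwise decomposition of the integrand
  have hpt : ∀ ω, ((∑ b1 : Bool, ∑ b2 : Bool, d b1 b2 * (η1a b1 b2 ω - τ b1 b2))
        + (∑ b2 : Bool, d (A1 ω) b2 / π1s (A1 ω) ω * (η2a (A1 ω) b2 ω - η1a (A1 ω) b2 ω))
        + (d (A1 ω) (A2 ω) / (π1s (A1 ω) ω * π2s (A1 ω) (A2 ω) ω)
            * (Y ω - η2a (A1 ω) (A2 ω) ω)))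
      = (∑ b1 : Bool, ∑ b2 : Bool, d b1 b2 * (η1a b1 b2 ω - τ b1 b2))
        + (∑ b1 : Bool, ∑ b2 : Bool, ind A1 b1 ω
            * (d b1 b2 / π1s b1 ω * (η2a b1 b2 ω - η1a b1 b2 ω)))
        + (∑ b1 : Bool, ∑ b2 : Bool, ind A1 b1 ω * ind A2 b2 ω
            * (d b1 b2 / (π1s b1 ω * π2s b1 b2 ω) * (Y ω - η2a b1 b2 ω))) := by
    intro ω
    have h1 : (∑ b2 : Bool, d (A1 ω) b2 / π1s (A1 ω) ω * (η2a (A1 ω) b2 ω - η1a (A1 ω) b2 ω))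
        = ∑ b1 : Bool, ∑ b2 : Bool, ind A1 b1 ω
            * (d b1 b2 / π1s b1 ω * (η2a b1 b2 ω - η1a b1 b2 ω)) := by
      cases hA : A1 ω <;> simp [Fintype.sum_bool, ind, hA]
    have h2 : (d (A1 ω) (A2 ω) / (π1s (A1 ω) ω * π2s (A1 ω) (A2 ω) ω)
          * (Y ω - η2a (A1 ω) (A2 ω) ω))
        = ∑ b1 : Bool, ∑ b2 : Bool, ind A1 b1 ω * ind A2 b2 ω
            * (d b1 b2 / (π1s b1 ω * π2s b1 b2 ω) * (Y ω - η2a b1 b2 ω)) := by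
      cases hA : A1 ω <;> cases hB : A2 ω <;> simp [Fintype.sum_bool, ind, hA, hB]
    rw [h1, h2]
  have hI0 : Integrable (fun ω => ∑ b1 : Bool, ∑ b2 : Bool,
      d b1 b2 * (η1a b1 b2 ω - τ b1 b2)) μ :=
    integrable_finset_sum _ fun b1 _ => integrable_finset_sum _ fun b2 _ =>
      (((hη1aI b1 b2).sub (integrable_const _)).const_mul _)
  have hI1 : Integrable (fun ω => ∑ b1 : Bool, ∑ b2 : Bool,
      ind A1 b1 ω * (d b1 b2 / π1s b1 ω * (η2a b1 b2 ω - η1a b1 b2 ω))) μ :=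
    integrable_finset_sum _ fun b1 _ => integrable_finset_sum _ fun b2 _ => hS1t b1 b2
  have hI2 : Integrable (fun ω => ∑ b1 : Bool, ∑ b2 : Bool,
      ind A1 b1 ω * ind A2 b2 ω
        * (d b1 b2 / (π1s b1 ω * π2s b1 b2 ω) * (Y ω - η2a b1 b2 ω))) μ :=
    integrable_finset_sum _ fun b1 _ => integrable_finset_sum _ fun b2 _ => hS2t b1 b2
  have hI01 : Integrable (fun ω => (∑ b1 : Bool, ∑ b2 : Bool,
      d b1 b2 * (η1a b1 b2 ω - τ b1 b2))
      + ∑ b1 : Bool, ∑ b2 : Bool, ind A1 b1 ω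
          * (d b1 b2 / π1s b1 ω * (η2a b1 b2 ω - η1a b1 b2 ω))) μ := hI0.add hI1
  rw [integral_congr_ae (ae_of_all _ hpt), integral_add hI01 hI2,
    integral_add hI0 hI1]
  have e0 : (∫ ω, ∑ b1 : Bool, ∑ b2 : Bool, d b1 b2 * (η1a b1 b2 ω - τ b1 b2) ∂μ)
      = ∑ b1 : Bool, ∑ b2 : Bool, d b1 b2 * ((∫ ω, η1a b1 b2 ω ∂μ) - τ b1 b2) := by
    rw [integral_finset_sum (μ := μ) Finset.univ
      (f := fun b1 ω => ∑ b2 : Bool, d b1 b2 * (η1a b1 b2 ω - τ b1 b2))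
      (fun b1 _ => integrable_finset_sum _ fun b2 _ =>
        (((hη1aI b1 b2).sub (integrable_const _)).const_mul _))]
    refine Finset.sum_congr rfl fun b1 _ => ?_
    rw [integral_finset_sum (μ := μ) Finset.univ
      (f := fun b2 ω => d b1 b2 * (η1a b1 b2 ω - τ b1 b2))
      (fun b2 _ => (((hη1aI b1 b2).sub (integrable_const _)).const_mul _))]
    refine Finset.sum_congr rfl fun b2 _ => ?_
    rw [integral_const_mul, integral_sub (hη1aI b1 b2) (integrable_const _), integral_const]
    simp [measure_univ]
  have e1 : (∫ ω, ∑ b1 : Bool, ∑ b2 : Bool,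
        ind A1 b1 ω * (d b1 b2 / π1s b1 ω * (η2a b1 b2 ω - η1a b1 b2 ω)) ∂μ)
      = ∑ b1 : Bool, ∑ b2 : Bool, ∫ ω,
        ind A1 b1 ω * (d b1 b2 / π1s b1 ω * (η2a b1 b2 ω - η1a b1 b2 ω)) ∂μ := by
    rw [integral_finset_sum (μ := μ) Finset.univ
      (f := fun b1 ω => ∑ b2 : Bool, ind A1 b1 ω
        * (d b1 b2 / π1s b1 ω * (η2a b1 b2 ω - η1a b1 b2 ω)))
      (fun b1 _ => integrable_finset_sum _ fun b2 _ => hS1t b1 b2)]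
    exact Finset.sum_congr rfl fun b1 _ =>
      integral_finset_sum Finset.univ
        (f := fun b2 ω => ind A1 b1 ω * (d b1 b2 / π1s b1 ω * (η2a b1 b2 ω - η1a b1 b2 ω)))
        (fun b2 _ => hS1t b1 b2)
  have e2 : (∫ ω, ∑ b1 : Bool, ∑ b2 : Bool, ind A1 b1 ω * ind A2 b2 ω
        * (d b1 b2 / (π1s b1 ω * π2s b1 b2 ω) * (Y ω - η2a b1 b2 ω)) ∂μ)
      = ∑ b1 : Bool, ∑ b2 : Bool, ∫ ω, ind A1 b1 ω * ind A2 b2 ω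
        * (d b1 b2 / (π1s b1 ω * π2s b1 b2 ω) * (Y ω - η2a b1 b2 ω)) ∂μ := by
    rw [integral_finset_sum (μ := μ) Finset.univ
      (f := fun b1 ω => ∑ b2 : Bool, ind A1 b1 ω * ind A2 b2 ω
        * (d b1 b2 / (π1s b1 ω * π2s b1 b2 ω) * (Y ω - η2a b1 b2 ω)))
      (fun b1 _ => integrable_finset_sum _ fun b2 _ => hS2t b1 b2)]
    exact Finset.sum_congr rfl fun b1 _ =>
      integral_finset_sum Finset.univ
        (f := fun b2 ω => ind A1 b1 ω * ind A2 b2 ω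
          * (d b1 b2 / (π1s b1 ω * π2s b1 b2 ω) * (Y ω - η2a b1 b2 ω)))
        (fun b2 _ => hS2t b1 b2)
  rw [e0, e1, e2]
  simp only [Fintype.sum_bool]
  linear_combination key true true + key true false + key false true + key false false

/-- Double robustness in the outcome direction: with correctly specified propensity
scores `π1*, π2*` but arbitrary bounded measurable outcome functions `η1, η2`,
`E[S0 + S1 + S2] = E[ Σ_(a1,a2) d(a1,a2) (η1*(a1,a2,Z1) − τ(a1,a2;θ)) ]`. -/
theorem dr_robust_outcome_direction
    {Ω 𝒵₁ 𝒵₂ : Type*} [MeasurableSpace Ω]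
    [MeasurableSpace 𝒵₁] [MeasurableSpace 𝒵₂]
    (μ : Measure Ω) [IsProbabilityMeasure μ]
    (Z1 : Ω → 𝒵₁) (Z2 : Ω → 𝒵₂) (A1 A2 : Ω → Bool) (Y : Ω → ℝ)
    (hZ1 : Measurable Z1) (hZ2 : Measurable Z2)
    (hA1 : Measurable A1) (hA2 : Measurable A2)
    (hYint : Integrable Y μ)
    (d : Bool → Bool → ℝ)
    -- true propensity scores: π1s b1 = P(A1=b1|Z1), π2s b1 b2 = P(A2=b2|A1=b1,Z1,Z2),
    -- πJ b1 = P(A1=b1|Z1,Z2)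
    (π1s πJ : Bool → Ω → ℝ) (π2s : Bool → Bool → Ω → ℝ)
    (hπ1s : ∀ b1, π1s b1 =ᵐ[μ] μ[ind A1 b1 | MeasurableSpace.comap Z1 inferInstance])
    (hπJ : ∀ b1, πJ b1 =ᵐ[μ]
      μ[ind A1 b1 | MeasurableSpace.comap (fun ω => (Z1 ω, Z2 ω)) inferInstance])
    (hπ2s : ∀ b1 b2, (fun ω => πJ b1 ω * π2s b1 b2 ω) =ᵐ[μ]
      μ[fun ω => ind A1 b1 ω * ind A2 b2 ω |
        MeasurableSpace.comap (fun ω => (Z1 ω, Z2 ω)) inferInstance])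
    (hpos1 : ∀ b1, ∀ᵐ ω ∂μ, 0 < π1s b1 ω)
    (hpos2 : ∀ b1 b2, ∀ᵐ ω ∂μ, 0 < π2s b1 b2 ω)
    (hposJ : ∀ b1, ∀ᵐ ω ∂μ, 0 < πJ b1 ω)
    -- true outcome regression η2s b1 b2 = E[Y | A1=b1, A2=b2, Z1, Z2]:
    (η2s : Bool → Bool → Ω → ℝ)
    (hη2meas : ∀ b1 b2,
      Measurable[MeasurableSpace.comap (fun ω => (Z1 ω, Z2 ω)) inferInstance] (η2s b1 b2))
    (hη2 : ∀ b1 b2, (fun ω => πJ b1 ω * π2s b1 b2 ω * η2s b1 b2 ω) =ᵐ[μ]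
      μ[fun ω => ind A1 b1 ω * ind A2 b2 ω * Y ω |
        MeasurableSpace.comap (fun ω => (Z1 ω, Z2 ω)) inferInstance])
    -- true iterated mean η1s b1 b2 = E[η2s b1 b2 | A1=b1, Z1]:
    (η1s : Bool → Bool → Ω → ℝ)
    (hη1meas : ∀ b1 b2, Measurable[MeasurableSpace.comap Z1 inferInstance] (η1s b1 b2))
    (hη1 : ∀ b1 b2, (fun ω => π1s b1 ω * η1s b1 b2 ω) =ᵐ[μ]
      μ[fun ω => ind A1 b1 ω * η2s b1 b2 ω | MeasurableSpace.comap Z1 inferInstance])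
    (hη1int : ∀ b1 b2, Integrable (η1s b1 b2) μ)
    (τ : Bool → Bool → ℝ)
    -- arbitrary working outcome models, bounded measurable:
    (η1a η2a : Bool → Bool → Ω → ℝ) (C : ℝ)
    (hη1ameas : ∀ b1 b2, Measurable[MeasurableSpace.comap Z1 inferInstance] (η1a b1 b2))
    (hη2ameas : ∀ b1 b2,
      Measurable[MeasurableSpace.comap (fun ω => (Z1 ω, Z2 ω)) inferInstance] (η2a b1 b2))
    (hη1abd : ∀ b1 b2 ω, |η1a b1 b2 ω| ≤ C)
    (hη2abd : ∀ b1 b2 ω, |η2a b1 b2 ω| ≤ C)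
    (hS2aint : Integrable (fun ω => d (A1 ω) (A2 ω) / (π1s (A1 ω) ω * π2s (A1 ω) (A2 ω) ω) * (Y ω - η2a (A1 ω) (A2 ω) ω)) μ)
    (hS1aint : Integrable (fun ω => ∑ b2 : Bool, d (A1 ω) b2 / π1s (A1 ω) ω * (η2a (A1 ω) b2 ω - η1a (A1 ω) b2 ω)) μ) :
    ∫ ω, ((∑ b1 : Bool, ∑ b2 : Bool, d b1 b2 * (η1a b1 b2 ω - τ b1 b2)) + (∑ b2 : Bool, d (A1 ω) b2 / π1s (A1 ω) ω * (η2a (A1 ω) b2 ω - η1a (A1 ω) b2 ω)) + (d (A1 ω) (A2 ω) / (π1s (A1 ω) ω * π2s (A1 ω) (A2 ω) ω) * (Y ω - η2a (A1 ω) (A2 ω) ω))) ∂μ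
      = ∑ b1 : Bool, ∑ b2 : Bool, d b1 b2 * ((∫ ω, η1s b1 b2 ω ∂μ) - τ b1 b2) := by
  have hG12 : (MeasurableSpace.comap Z1 inferInstance : MeasurableSpace Ω)
      ≤ MeasurableSpace.comap (fun ω => (Z1 ω, Z2 ω)) inferInstance := by
    intro s hs
    rw [MeasurableSpace.measurableSet_comap] at hs ⊢
    obtain ⟨t, ht, rfl⟩ := hs
    exact ⟨Prod.fst ⁻¹' t, measurable_fst ht, rfl⟩
  exact dr_aux μ hZ1.comap_le (hZ1.prodMk hZ2).comap_le hG12 A1 A2 Y hA1 hA2 hYint d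
    π1s πJ π2s hπ1s hπJ hπ2s hpos1 hpos2 hposJ η2s hη2meas hη2 η1s hη1meas hη1 hη1int τ
    η1a η2a C hη1ameas hη2ameas hη1abd hη2abd hS2aint hS1aint
end

section
/- Neyman orthogonality in the propensity direction: d/dr |_{r=0} E[ Ψ(θ, η*, π* + r δ_π) ] = 0 for any bounded measurable perturbation δ_π = (δ_{π1}, δ_{π2}) such that π* + r δ_π stays bounded away from 0 for small r, where η* are the true iterated conditional means. -/
open MeasureTheory Filter

section Aux

variable {Omg : Type*} {m m0 : MeasurableSpace Omg}

lemma aux_integrable_of_bdd {μ : Measure Omg} [IsFiniteMeasure μ] {f : Omg → ℝ} {B : ℝ}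
    (hf : AEStronglyMeasurable f μ) (h : ∀ᵐ ω ∂μ, ‖f ω‖ ≤ B) : Integrable f μ :=
  ⟨hf, HasFiniteIntegral.of_bounded h⟩

lemma aux_integral_mul_eq_zero (hm : m ≤ m0) {μ : Measure Omg} [IsProbabilityMeasure μ]
    {g f : Omg → ℝ} {B : ℝ}
    (hg : StronglyMeasurable[m] g) (hgbd : ∀ᵐ ω ∂μ, ‖g ω‖ ≤ B)
    (hf : Integrable f μ) (h0 : μ[f|m] =ᵐ[μ] 0) :
    ∫ ω, g ω * f ω ∂μ = 0 := by
  have h1 : (∫ ω, g ω * f ω ∂μ) = ∫ ω, (μ[(fun ω => g ω * f ω)|m]) ω ∂μ :=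
    (integral_condExp hm).symm
  have h2 : μ[(fun ω => g ω * f ω)|m] =ᵐ[μ] 0 := by
    have hmul : μ[(fun ω => g ω * f ω)|m] =ᵐ[μ] g * μ[f|m] :=
      condExp_stronglyMeasurable_mul_of_bound hm hg hf B hgbd
    refine hmul.trans ?_
    filter_upwards [h0] with ω hω
    have h3 : (μ[f|m]) ω = 0 := hω
    simp [Pi.mul_apply, h3]
  rw [h1, integral_congr_ae h2]
  simp

lemma aux_norm_mul_le {a b c : ℝ} (ha : ‖a‖ ≤ 1) (hb : ‖b‖ ≤ c) : ‖a * b‖ ≤ c := by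
  rw [norm_mul]
  calc ‖a‖ * ‖b‖ ≤ 1 * c := mul_le_mul ha hb (norm_nonneg _) zero_le_one
  _ = c := one_mul c

lemma aux_sum_ind {Omg : Type*} (A : Omg → Bool) (h : Bool → ℝ) (ω : Omg) :
    ∑ b : Bool, ind A b ω * h b = h (A ω) := by
  cases hA : A ω <;> simp [ind, Fintype.sum_bool, hA]

lemma aux_sum_ind2 {Omg : Type*} (A B : Omg → Bool) (h : Bool → Bool → ℝ) (ω : Omg) :
    ∑ b1 : Bool, ∑ b2 : Bool, ind A b1 ω * ind B b2 ω * h b1 b2 = h (A ω) (B ω) := by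
  cases hA : A ω <;> cases hB : B ω <;> simp [ind, Fintype.sum_bool, hA, hB]

end Aux

/-- Neyman orthogonality in the propensity direction: the Gateaux derivative of
`E[Ψ(θ, η*, π* + r δ_π)]` in `r` at `r = 0` vanishes, for any bounded measurable
perturbation `δ_π = (δ_π1, δ_π2)` such that the perturbed propensity scores remain
bounded away from zero for small `r`, where `η*` are the true iterated conditional
means. -/
theorem dr_neyman_orthogonality_propensity
    {Ω 𝒵₁ 𝒵₂ : Type*} [MeasurableSpace Ω]
    [MeasurableSpace 𝒵₁] [MeasurableSpace 𝒵₂]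
    (μ : Measure Ω) [IsProbabilityMeasure μ]
    (Z1 : Ω → 𝒵₁) (Z2 : Ω → 𝒵₂) (A1 A2 : Ω → Bool) (Y : Ω → ℝ)
    (hZ1 : Measurable Z1) (hZ2 : Measurable Z2)
    (hA1 : Measurable A1) (hA2 : Measurable A2)
    (hYint : Integrable Y μ)
    (d : Bool → Bool → ℝ)
    -- true propensity scores: π1s b1 = P(A1=b1|Z1), π2s b1 b2 = P(A2=b2|A1=b1,Z1,Z2),
    -- πJ b1 = P(A1=b1|Z1,Z2)
    (π1s πJ : Bool → Ω → ℝ) (π2s : Bool → Bool → Ω → ℝ) (ε : ℝ) (hε : 0 < ε) 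
    (hπ1s : ∀ b1, π1s b1 =ᵐ[μ] μ[ind A1 b1 | MeasurableSpace.comap Z1 inferInstance])
    (hπJ : ∀ b1, πJ b1 =ᵐ[μ]
      μ[ind A1 b1 | MeasurableSpace.comap (fun ω => (Z1 ω, Z2 ω)) inferInstance])
    (hπ2s : ∀ b1 b2, (fun ω => πJ b1 ω * π2s b1 b2 ω) =ᵐ[μ]
      μ[fun ω => ind A1 b1 ω * ind A2 b2 ω |
        MeasurableSpace.comap (fun ω => (Z1 ω, Z2 ω)) inferInstance])
    (hpos1 : ∀ b1, ∀ᵐ ω ∂μ, ε ≤ π1s b1 ω ∧ π1s b1 ω ≤ 1)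
    (hpos2 : ∀ b1 b2, ∀ᵐ ω ∂μ, ε ≤ π2s b1 b2 ω ∧ π2s b1 b2 ω ≤ 1)
    (hposJ : ∀ b1, ∀ᵐ ω ∂μ, 0 < πJ b1 ω)
    -- true outcome regression η2s b1 b2 = E[Y | A1=b1, A2=b2, Z1, Z2]:
    (η2s : Bool → Bool → Ω → ℝ)
    (hη2meas : ∀ b1 b2,
      Measurable[MeasurableSpace.comap (fun ω => (Z1 ω, Z2 ω)) inferInstance] (η2s b1 b2))
    (hη2 : ∀ b1 b2, (fun ω => πJ b1 ω * π2s b1 b2 ω * η2s b1 b2 ω) =ᵐ[μ]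
      μ[fun ω => ind A1 b1 ω * ind A2 b2 ω * Y ω |
        MeasurableSpace.comap (fun ω => (Z1 ω, Z2 ω)) inferInstance])
    -- true iterated mean η1s b1 b2 = E[η2s b1 b2 | A1=b1, Z1]:
    (η1s : Bool → Bool → Ω → ℝ)
    (hη1meas : ∀ b1 b2, Measurable[MeasurableSpace.comap Z1 inferInstance] (η1s b1 b2))
    (hη1 : ∀ b1 b2, (fun ω => π1s b1 ω * η1s b1 b2 ω) =ᵐ[μ]
      μ[fun ω => ind A1 b1 ω * η2s b1 b2 ω | MeasurableSpace.comap Z1 inferInstance])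
    (C : ℝ) (hη2bd : ∀ b1 b2 ω, |η2s b1 b2 ω| ≤ C) (hη1bd : ∀ b1 b2 ω, |η1s b1 b2 ω| ≤ C)
    (τ : Bool → Bool → ℝ)
    -- bounded measurable perturbations of (π1, π2):
    (δπ1 : Bool → Ω → ℝ) (δπ2 : Bool → Bool → Ω → ℝ)
    (hδπ1meas : ∀ b1, Measurable[MeasurableSpace.comap Z1 inferInstance] (δπ1 b1))
    (hδπ2meas : ∀ b1 b2,
      Measurable[MeasurableSpace.comap (fun ω => (Z1 ω, Z2 ω)) inferInstance] (δπ2 b1 b2))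
    (hδπ1bd : ∀ b1 ω, |δπ1 b1 ω| ≤ C) (hδπ2bd : ∀ b1 b2 ω, |δπ2 b1 b2 ω| ≤ C)
    -- the perturbed propensity scores stay bounded away from zero for small r:
    (r0 ε' : ℝ) (hr0 : 0 < r0) (hε' : 0 < ε')
    (hstay : ∀ r : ℝ, |r| < r0 → ∀ b1 b2 ω,
      ε' ≤ π1s b1 ω + r * δπ1 b1 ω ∧ ε' ≤ π2s b1 b2 ω + r * δπ2 b1 b2 ω) :
    HasDerivAt (fun r : ℝ => ∫ ω, ((∑ b1 : Bool, ∑ b2 : Bool, d b1 b2 * (η1s b1 b2 ω - τ b1 b2)) + (∑ b2 : Bool, d (A1 ω) b2 / (π1s (A1 ω) ω + r * δπ1 (A1 ω) ω) * (η2s (A1 ω) b2 ω - η1s (A1 ω) b2 ω)) + (d (A1 ω) (A2 ω) / ((π1s (A1 ω) ω + r * δπ1 (A1 ω) ω) * (π2s (A1 ω) (A2 ω) ω + r * δπ2 (A1 ω) (A2 ω) ω)) * (Y ω - η2s (A1 ω) (A2 ω) ω))) ∂μ) 0 0 := by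
  classical
  have hm1 : MeasurableSpace.comap Z1 inferInstance ≤ ‹MeasurableSpace Ω› := hZ1.comap_le
  have hm2 : MeasurableSpace.comap (fun ω => (Z1 ω, Z2 ω)) inferInstance
      ≤ ‹MeasurableSpace Ω› := (hZ1.prodMk hZ2).comap_le
  have hm12 : MeasurableSpace.comap Z1 inferInstance
      ≤ MeasurableSpace.comap (fun ω : Ω => (Z1 ω, Z2 ω)) inferInstance := by
    rintro s ⟨t, ht, rfl⟩
    exact ⟨t ×ˢ Set.univ, ht.prod MeasurableSet.univ, by ext ω; simp⟩
  have hindmeas : ∀ (A : Ω → Bool), Measurable A → ∀ (b : Bool), Measurable (ind A b) :=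
    fun A hA b => Measurable.ite (hA (measurableSet_singleton b)) measurable_const measurable_const
  have hindbd : ∀ (A : Ω → Bool) (b : Bool) (ω : Ω), ‖ind A b ω‖ ≤ 1 := by
    intro A b ω; unfold ind; split <;> simp
  have hindint : ∀ b1, Integrable (ind A1 b1) μ :=
    fun b1 => aux_integrable_of_bdd (hindmeas A1 hA1 b1).aestronglyMeasurable
      (Filter.Eventually.of_forall (hindbd A1 b1))
  have hind2int : ∀ b1 b2, Integrable (fun ω => ind A1 b1 ω * ind A2 b2 ω) μ := fun b1 b2 =>
    aux_integrable_of_bdd ((hindmeas A1 hA1 b1).mul (hindmeas A2 hA2 b2)).aestronglyMeasurable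
      (Filter.Eventually.of_forall fun ω => aux_norm_mul_le (hindbd A1 b1 ω) (hindbd A2 b2 ω))
  have hη2m : ∀ b1 b2, Measurable (η2s b1 b2) := fun b1 b2 => (hη2meas b1 b2).mono hm2 le_rfl
  have hη1m : ∀ b1 b2, Measurable (η1s b1 b2) := fun b1 b2 => (hη1meas b1 b2).mono hm1 le_rfl
  have hη2int : ∀ b1 b2, Integrable (η2s b1 b2) μ := fun b1 b2 =>
    aux_integrable_of_bdd (hη2m b1 b2).aestronglyMeasurable
      (Filter.Eventually.of_forall fun ω => by rw [Real.norm_eq_abs]; exact hη2bd b1 b2 ω)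
  have hS0int : Integrable
      (fun ω => ∑ b1 : Bool, ∑ b2 : Bool, d b1 b2 * (η1s b1 b2 ω - τ b1 b2)) μ := by
    refine integrable_finset_sum _ fun b1 _ => integrable_finset_sum _ fun b2 _ => ?_
    refine aux_integrable_of_bdd (B := ‖d b1 b2‖ * (C + ‖τ b1 b2‖)) (measurable_const.mul
      ((hη1m b1 b2).sub measurable_const)).aestronglyMeasurable
      (Filter.Eventually.of_forall fun ω => ?_)
    rw [norm_mul]
    refine mul_le_mul_of_nonneg_left ((norm_sub_le _ _).trans
      (add_le_add (by rw [Real.norm_eq_abs]; exact hη1bd b1 b2 ω) le_rfl)) (norm_nonneg _)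
  -- the key claim: the integral is constant for |r| < r0
  have hrkey : ∀ r : ℝ, |r| < r0 →
      (∫ ω, ((∑ b1 : Bool, ∑ b2 : Bool, d b1 b2 * (η1s b1 b2 ω - τ b1 b2)) + (∑ b2 : Bool, d (A1 ω) b2 / (π1s (A1 ω) ω + r * δπ1 (A1 ω) ω) * (η2s (A1 ω) b2 ω - η1s (A1 ω) b2 ω)) + (d (A1 ω) (A2 ω) / ((π1s (A1 ω) ω + r * δπ1 (A1 ω) ω) * (π2s (A1 ω) (A2 ω) ω + r * δπ2 (A1 ω) (A2 ω) ω)) * (Y ω - η2s (A1 ω) (A2 ω) ω))) ∂μ)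
      = ∫ ω, (∑ b1 : Bool, ∑ b2 : Bool, d b1 b2 * (η1s b1 b2 ω - τ b1 b2)) ∂μ := by
    intro r hr
    set t1 : Bool → Bool → Ω → ℝ := fun b1 b2 ω =>
      ind A1 b1 ω * (d b1 b2 / (π1s b1 ω + r * δπ1 b1 ω) * (η2s b1 b2 ω - η1s b1 b2 ω))
      with ht1def
    set t2 : Bool → Bool → Ω → ℝ := fun b1 b2 ω =>
      ind A1 b1 ω * ind A2 b2 ω *
        (d b1 b2 / ((π1s b1 ω + r * δπ1 b1 ω) * (π2s b1 b2 ω + r * δπ2 b1 b2 ω)) *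
          (Y ω - η2s b1 b2 ω)) with ht2def
    -- first-period correction terms integrate to zero
    have hkey1 : ∀ b1 b2, Integrable (t1 b1 b2) μ ∧ (∫ ω, t1 b1 b2 ω ∂μ) = 0 := by
      intro b1 b2
      set g1 : Ω → ℝ := fun ω =>
        d b1 b2 / ((μ[ind A1 b1|MeasurableSpace.comap Z1 inferInstance]) ω + r * δπ1 b1 ω)
        with hg1def
      set f1 : Ω → ℝ := fun ω => ind A1 b1 ω * (η2s b1 b2 ω - η1s b1 b2 ω) with hf1def
      have hg1meas : StronglyMeasurable[MeasurableSpace.comap Z1 inferInstance] g1 :=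
        (measurable_const.div
          (stronglyMeasurable_condExp.measurable.add
            ((hδπ1meas b1).const_mul r))).stronglyMeasurable
      have hg1bd : ∀ᵐ ω ∂μ, ‖g1 ω‖ ≤ |d b1 b2| / ε' := by
        filter_upwards [(hπ1s b1).symm] with ω h
        have hden : ε' ≤ (μ[ind A1 b1|MeasurableSpace.comap Z1 inferInstance]) ω
            + r * δπ1 b1 ω := by rw [h]; exact (hstay r hr b1 b2 ω).1
        simp only [hg1def]
        rw [Real.norm_eq_abs, abs_div, abs_of_pos (lt_of_lt_of_le hε' hden)]
        gcongr
        all_goals first | exact hε' | exact hden | exact le_trans hε'.le hden | positivity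
      have hf1int : Integrable f1 μ := by
        refine aux_integrable_of_bdd (B := C + C) ((hindmeas A1 hA1 b1).mul
          ((hη2m b1 b2).sub (hη1m b1 b2))).aestronglyMeasurable
          (Filter.Eventually.of_forall fun ω => ?_)
        refine aux_norm_mul_le (hindbd A1 b1 ω) ((norm_sub_le _ _).trans (add_le_add
          (by rw [Real.norm_eq_abs]; exact hη2bd b1 b2 ω)
          (by rw [Real.norm_eq_abs]; exact hη1bd b1 b2 ω)))
      have hintA : Integrable (fun ω => ind A1 b1 ω * η2s b1 b2 ω) μ :=
        aux_integrable_of_bdd ((hindmeas A1 hA1 b1).mul (hη2m b1 b2)).aestronglyMeasurable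
          (Filter.Eventually.of_forall fun ω => aux_norm_mul_le (hindbd A1 b1 ω)
            (by rw [Real.norm_eq_abs]; exact hη2bd b1 b2 ω))
      have hintB : Integrable (fun ω => ind A1 b1 ω * η1s b1 b2 ω) μ :=
        aux_integrable_of_bdd ((hindmeas A1 hA1 b1).mul (hη1m b1 b2)).aestronglyMeasurable
          (Filter.Eventually.of_forall fun ω => aux_norm_mul_le (hindbd A1 b1 ω)
            (by rw [Real.norm_eq_abs]; exact hη1bd b1 b2 ω))
      have hEf1 : μ[f1|MeasurableSpace.comap Z1 inferInstance] =ᵐ[μ] 0 := by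
        have hsplit : f1 = (fun ω => ind A1 b1 ω * η2s b1 b2 ω)
            - (fun ω => ind A1 b1 ω * η1s b1 b2 ω) := by
          funext ω; simp only [hf1def, Pi.sub_apply]; ring
        have hb : μ[(fun ω => ind A1 b1 ω * η1s b1 b2 ω)|MeasurableSpace.comap Z1 inferInstance]
            =ᵐ[μ] fun ω => π1s b1 ω * η1s b1 b2 ω := by
          have hcomm : (fun ω => ind A1 b1 ω * η1s b1 b2 ω)
              = (η1s b1 b2) * (ind A1 b1) := funext fun ω => mul_comm _ _
          rw [hcomm]
          refine (condExp_stronglyMeasurable_mul_of_bound hm1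
            (hη1meas b1 b2).stronglyMeasurable (hindint b1) C
            (Filter.Eventually.of_forall fun ω => by
              rw [Real.norm_eq_abs]; exact hη1bd b1 b2 ω)).trans ?_
          filter_upwards [hπ1s b1] with ω h
          simp only [Pi.mul_apply]
          rw [← h]; ring
        have ha : μ[(fun ω => ind A1 b1 ω * η2s b1 b2 ω)|MeasurableSpace.comap Z1 inferInstance]
            =ᵐ[μ] fun ω => π1s b1 ω * η1s b1 b2 ω := (hη1 b1 b2).symm
        rw [hsplit]
        refine (condExp_sub hintA hintB _).trans ?_
        filter_upwards [ha, hb] with ω h1 h2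
        simp [Pi.sub_apply, h1, h2]
      have ht1ae : t1 b1 b2 =ᵐ[μ] fun ω => g1 ω * f1 ω := by
        filter_upwards [(hπ1s b1).symm] with ω h
        simp only [ht1def, hg1def, hf1def]
        rw [h]; ring
      have ht1int : Integrable (t1 b1 b2) μ :=
        (hf1int.bdd_mul (hg1meas.mono hm1).aestronglyMeasurable hg1bd).congr ht1ae.symm
      refine ⟨ht1int, ?_⟩
      rw [integral_congr_ae ht1ae]
      exact aux_integral_mul_eq_zero hm1 hg1meas hg1bd hf1int hEf1
    -- second-period correction terms integrate to zero
    have hkey2 : ∀ b1 b2, Integrable (t2 b1 b2) μ ∧ (∫ ω, t2 b1 b2 ω ∂μ) = 0 := by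
      intro b1 b2
      set q2 : Ω → ℝ := fun ω =>
        (μ[fun ω => ind A1 b1 ω * ind A2 b2 ω|
            MeasurableSpace.comap (fun ω => (Z1 ω, Z2 ω)) inferInstance]) ω
          / (μ[ind A1 b1|MeasurableSpace.comap (fun ω => (Z1 ω, Z2 ω)) inferInstance]) ω
        with hq2def
      have hq2 : q2 =ᵐ[μ] π2s b1 b2 := by
        filter_upwards [hπ2s b1 b2, hπJ b1, hposJ b1] with ω h1 h2 h3
        simp only [hq2def]
        rw [← h1, ← h2]
        exact mul_div_cancel_left₀ _ h3.ne'
      set g2 : Ω → ℝ := fun ω =>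
        d b1 b2 / (((μ[ind A1 b1|MeasurableSpace.comap Z1 inferInstance]) ω + r * δπ1 b1 ω)
          * (q2 ω + r * δπ2 b1 b2 ω)) with hg2def
      set f2 : Ω → ℝ := fun ω => ind A1 b1 ω * ind A2 b2 ω * (Y ω - η2s b1 b2 ω) with hf2def
      have hg2meas : StronglyMeasurable[MeasurableSpace.comap
          (fun ω : Ω => (Z1 ω, Z2 ω)) inferInstance] g2 :=
        (measurable_const.div
          (((stronglyMeasurable_condExp.measurable.mono hm12 le_rfl).add
              (((hδπ1meas b1).mono hm12 le_rfl).const_mul r)).mul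
            ((stronglyMeasurable_condExp.measurable.div
                stronglyMeasurable_condExp.measurable).add
              ((hδπ2meas b1 b2).const_mul r)))).stronglyMeasurable
      have hg2bd : ∀ᵐ ω ∂μ, ‖g2 ω‖ ≤ |d b1 b2| / (ε' * ε') := by
        filter_upwards [(hπ1s b1).symm, hq2] with ω h1 h2
        have hd1 : ε' ≤ (μ[ind A1 b1|MeasurableSpace.comap Z1 inferInstance]) ω
            + r * δπ1 b1 ω := by rw [h1]; exact (hstay r hr b1 b2 ω).1
        have hd2 : ε' ≤ q2 ω + r * δπ2 b1 b2 ω := by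
          rw [h2]; exact (hstay r hr b1 b2 ω).2
        simp only [hg2def]
        rw [Real.norm_eq_abs, abs_div, abs_of_pos
          (mul_pos (lt_of_lt_of_le hε' hd1) (lt_of_lt_of_le hε' hd2))]
        gcongr
        all_goals first | exact hd1 | exact hd2 | exact le_trans hε'.le hd1 | exact le_trans hε'.le hd2 | exact mul_nonneg (le_trans hε'.le hd1) (le_trans hε'.le hd2) | exact mul_le_mul hd1 hd2 hε'.le (le_trans hε'.le hd1) | positivity
      have hf2int : Integrable f2 μ :=
        (hYint.sub (hη2int b1 b2)).bdd_mul
          ((hindmeas A1 hA1 b1).mul (hindmeas A2 hA2 b2)).aestronglyMeasurable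
          (Filter.Eventually.of_forall fun ω =>
            aux_norm_mul_le (hindbd A1 b1 ω) (hindbd A2 b2 ω))
      have hintA : Integrable (fun ω => ind A1 b1 ω * ind A2 b2 ω * Y ω) μ :=
        hYint.bdd_mul
          ((hindmeas A1 hA1 b1).mul (hindmeas A2 hA2 b2)).aestronglyMeasurable
          (Filter.Eventually.of_forall fun ω =>
            aux_norm_mul_le (hindbd A1 b1 ω) (hindbd A2 b2 ω))
      have hintB : Integrable (fun ω => ind A1 b1 ω * ind A2 b2 ω * η2s b1 b2 ω) μ :=
        aux_integrable_of_bdd (((hindmeas A1 hA1 b1).mul (hindmeas A2 hA2 b2)).mul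
          (hη2m b1 b2)).aestronglyMeasurable
          (Filter.Eventually.of_forall fun ω =>
            aux_norm_mul_le (aux_norm_mul_le (hindbd A1 b1 ω) (hindbd A2 b2 ω))
              (by rw [Real.norm_eq_abs]; exact hη2bd b1 b2 ω))
      have hEf2 : μ[f2|MeasurableSpace.comap (fun ω => (Z1 ω, Z2 ω)) inferInstance]
          =ᵐ[μ] 0 := by
        have hsplit : f2 = (fun ω => ind A1 b1 ω * ind A2 b2 ω * Y ω)
            - (fun ω => ind A1 b1 ω * ind A2 b2 ω * η2s b1 b2 ω) := by
          funext ω; simp only [hf2def, Pi.sub_apply]; ring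
        have hb : μ[(fun ω => ind A1 b1 ω * ind A2 b2 ω * η2s b1 b2 ω)|
            MeasurableSpace.comap (fun ω => (Z1 ω, Z2 ω)) inferInstance]
            =ᵐ[μ] fun ω => πJ b1 ω * π2s b1 b2 ω * η2s b1 b2 ω := by
          have hcomm : (fun ω => ind A1 b1 ω * ind A2 b2 ω * η2s b1 b2 ω)
              = (η2s b1 b2) * (fun ω => ind A1 b1 ω * ind A2 b2 ω) :=
            funext fun ω => mul_comm _ _
          rw [hcomm]
          refine (condExp_stronglyMeasurable_mul_of_bound hm2
            (hη2meas b1 b2).stronglyMeasurable (hind2int b1 b2) C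
            (Filter.Eventually.of_forall fun ω => by
              rw [Real.norm_eq_abs]; exact hη2bd b1 b2 ω)).trans ?_
          filter_upwards [hπ2s b1 b2] with ω h
          simp only [Pi.mul_apply]
          rw [← h]; ring
        have ha : μ[(fun ω => ind A1 b1 ω * ind A2 b2 ω * Y ω)|
            MeasurableSpace.comap (fun ω => (Z1 ω, Z2 ω)) inferInstance]
            =ᵐ[μ] fun ω => πJ b1 ω * π2s b1 b2 ω * η2s b1 b2 ω := (hη2 b1 b2).symm
        rw [hsplit]
        refine (condExp_sub hintA hintB _).trans ?_
        filter_upwards [ha, hb] with ω h1 h2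
        simp [Pi.sub_apply, h1, h2]
      have ht2ae : t2 b1 b2 =ᵐ[μ] fun ω => g2 ω * f2 ω := by
        filter_upwards [(hπ1s b1).symm, hq2] with ω h1 h2
        simp only [ht2def, hg2def, hf2def]
        rw [h1, h2]; ring
      have ht2int : Integrable (t2 b1 b2) μ :=
        (hf2int.bdd_mul (hg2meas.mono hm2).aestronglyMeasurable hg2bd).congr ht2ae.symm
      refine ⟨ht2int, ?_⟩
      rw [integral_congr_ae ht2ae]
      exact aux_integral_mul_eq_zero hm2 hg2meas hg2bd hf2int hEf2
    -- assemble
    have hT1int : Integrable (fun ω => ∑ b1 : Bool, ∑ b2 : Bool, t1 b1 b2 ω) μ :=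
      integrable_finset_sum _ fun b1 _ => integrable_finset_sum _ fun b2 _ => (hkey1 b1 b2).1
    have hT2int : Integrable (fun ω => ∑ b1 : Bool, ∑ b2 : Bool, t2 b1 b2 ω) μ :=
      integrable_finset_sum _ fun b1 _ => integrable_finset_sum _ fun b2 _ => (hkey2 b1 b2).1
    have hT1zero : (∫ ω, ∑ b1 : Bool, ∑ b2 : Bool, t1 b1 b2 ω ∂μ) = 0 := by
      rw [integral_finset_sum _ fun b1 _ =>
        integrable_finset_sum _ fun b2 _ => (hkey1 b1 b2).1]
      refine Finset.sum_eq_zero fun b1 _ => ?_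
      rw [integral_finset_sum _ fun b2 _ => (hkey1 b1 b2).1]
      exact Finset.sum_eq_zero fun b2 _ => (hkey1 b1 b2).2
    have hT2zero : (∫ ω, ∑ b1 : Bool, ∑ b2 : Bool, t2 b1 b2 ω ∂μ) = 0 := by
      rw [integral_finset_sum _ fun b1 _ =>
        integrable_finset_sum _ fun b2 _ => (hkey2 b1 b2).1]
      refine Finset.sum_eq_zero fun b1 _ => ?_
      rw [integral_finset_sum _ fun b2 _ => (hkey2 b1 b2).1]
      exact Finset.sum_eq_zero fun b2 _ => (hkey2 b1 b2).2
    have hptwise : ∀ ω, ((∑ b1 : Bool, ∑ b2 : Bool, d b1 b2 * (η1s b1 b2 ω - τ b1 b2)) + (∑ b2 : Bool, d (A1 ω) b2 / (π1s (A1 ω) ω + r * δπ1 (A1 ω) ω) * (η2s (A1 ω) b2 ω - η1s (A1 ω) b2 ω)) + (d (A1 ω) (A2 ω) / ((π1s (A1 ω) ω + r * δπ1 (A1 ω) ω) * (π2s (A1 ω) (A2 ω) ω + r * δπ2 (A1 ω) (A2 ω) ω)) * (Y ω - η2s (A1 ω) (A2 ω) ω)))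
        = (∑ b1 : Bool, ∑ b2 : Bool, d b1 b2 * (η1s b1 b2 ω - τ b1 b2))
          + ((∑ b1 : Bool, ∑ b2 : Bool, t1 b1 b2 ω)
            + (∑ b1 : Bool, ∑ b2 : Bool, t2 b1 b2 ω)) := by
      intro ω
      have e1 : (∑ b2 : Bool, d (A1 ω) b2 / (π1s (A1 ω) ω + r * δπ1 (A1 ω) ω)
            * (η2s (A1 ω) b2 ω - η1s (A1 ω) b2 ω))
          = ∑ b1 : Bool, ∑ b2 : Bool, t1 b1 b2 ω := by
        simp only [ht1def]
        rw [Finset.sum_comm]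
        refine Finset.sum_congr rfl fun b2 _ => ?_
        exact (aux_sum_ind A1 (fun b1 => d b1 b2 / (π1s b1 ω + r * δπ1 b1 ω)
          * (η2s b1 b2 ω - η1s b1 b2 ω)) ω).symm
      have e2 : d (A1 ω) (A2 ω) / ((π1s (A1 ω) ω + r * δπ1 (A1 ω) ω)
            * (π2s (A1 ω) (A2 ω) ω + r * δπ2 (A1 ω) (A2 ω) ω))
            * (Y ω - η2s (A1 ω) (A2 ω) ω)
          = ∑ b1 : Bool, ∑ b2 : Bool, t2 b1 b2 ω := by
        simp only [ht2def]
        exact (aux_sum_ind2 A1 A2 (fun b1 b2 => d b1 b2 / ((π1s b1 ω + r * δπ1 b1 ω)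
          * (π2s b1 b2 ω + r * δπ2 b1 b2 ω)) * (Y ω - η2s b1 b2 ω)) ω).symm
      rw [e1, e2]; ring
    calc (∫ ω, ((∑ b1 : Bool, ∑ b2 : Bool, d b1 b2 * (η1s b1 b2 ω - τ b1 b2)) + (∑ b2 : Bool, d (A1 ω) b2 / (π1s (A1 ω) ω + r * δπ1 (A1 ω) ω) * (η2s (A1 ω) b2 ω - η1s (A1 ω) b2 ω)) + (d (A1 ω) (A2 ω) / ((π1s (A1 ω) ω + r * δπ1 (A1 ω) ω) * (π2s (A1 ω) (A2 ω) ω + r * δπ2 (A1 ω) (A2 ω) ω)) * (Y ω - η2s (A1 ω) (A2 ω) ω))) ∂μ)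
        = ∫ ω, ((∑ b1 : Bool, ∑ b2 : Bool, d b1 b2 * (η1s b1 b2 ω - τ b1 b2))
          + ((∑ b1 : Bool, ∑ b2 : Bool, t1 b1 b2 ω)
            + (∑ b1 : Bool, ∑ b2 : Bool, t2 b1 b2 ω))) ∂μ :=
          integral_congr_ae (Filter.Eventually.of_forall hptwise)
      _ = (∫ ω, (∑ b1 : Bool, ∑ b2 : Bool, d b1 b2 * (η1s b1 b2 ω - τ b1 b2)) ∂μ)
          + ((∫ ω, ∑ b1 : Bool, ∑ b2 : Bool, t1 b1 b2 ω ∂μ)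
            + (∫ ω, ∑ b1 : Bool, ∑ b2 : Bool, t2 b1 b2 ω ∂μ)) := by
          have hT12 : Integrable (fun ω => (∑ b1 : Bool, ∑ b2 : Bool, t1 b1 b2 ω)
              + (∑ b1 : Bool, ∑ b2 : Bool, t2 b1 b2 ω)) μ := hT1int.add hT2int
          rw [integral_add hS0int hT12, integral_add hT1int hT2int]
      _ = ∫ ω, (∑ b1 : Bool, ∑ b2 : Bool, d b1 b2 * (η1s b1 b2 ω - τ b1 b2)) ∂μ := by
          rw [hT1zero, hT2zero]; ring
  have heq : (fun r : ℝ => ∫ ω, ((∑ b1 : Bool, ∑ b2 : Bool, d b1 b2 * (η1s b1 b2 ω - τ b1 b2)) + (∑ b2 : Bool, d (A1 ω) b2 / (π1s (A1 ω) ω + r * δπ1 (A1 ω) ω) * (η2s (A1 ω) b2 ω - η1s (A1 ω) b2 ω)) + (d (A1 ω) (A2 ω) / ((π1s (A1 ω) ω + r * δπ1 (A1 ω) ω) * (π2s (A1 ω) (A2 ω) ω + r * δπ2 (A1 ω) (A2 ω) ω)) * (Y ω - η2s (A1 ω) (A2 ω) ω))) ∂μ)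
      =ᶠ[nhds (0:ℝ)] fun _ =>
        ∫ ω, (∑ b1 : Bool, ∑ b2 : Bool, d b1 b2 * (η1s b1 b2 ω - τ b1 b2)) ∂μ := by
    have hmem : Set.Ioo (-r0) r0 ∈ nhds (0:ℝ) := Ioo_mem_nhds (neg_lt_zero.mpr hr0) hr0
    filter_upwards [hmem] with r hrm
    exact hrkey r (abs_lt.mpr ⟨hrm.1, hrm.2⟩)
  exact (hasDerivAt_const (0:ℝ) _).congr_of_eventuallyEq heq
end

section
/- Single-period AIPW double robustness: define ψ(π,η) = 1{A=a}(Y − η(Z))/π(Z) + η(Z). If either π(Z) = P(A=a|Z) almost surely, or η(Z) = E[Y|A=a,Z] almost surely, then E[ψ(π,η)] = E[E[Y|A=a,Z]], provided π is bounded away from 0 and η, Y are integrable. -/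
open MeasureTheory Filter

/-- Single-period AIPW double robustness: with
`ψ(π,η) = 1{A=a}(Y − η(Z))/π(Z) + η(Z)`, if either `π(Z) = P(A=a|Z)` a.s. or
`η(Z) = E[Y|A=a,Z]` a.s., then `E[ψ(π,η)] = E[E[Y|A=a,Z]]`, provided `π` is
bounded away from `0` and `η`, `Y` are integrable. -/
theorem aipw_double_robustness
    {Ω 𝒵 : Type*} [MeasurableSpace Ω] [MeasurableSpace 𝒵]
    (μ : Measure Ω) [IsProbabilityMeasure μ]
    (Z : Ω → 𝒵) (A : Ω → Bool) (Y : Ω → ℝ) (a : Bool)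
    (hZ : Measurable Z) (hA : Measurable A) (hY : Integrable Y μ)
    -- working nuisance models:
    (π η : Ω → ℝ) (ε : ℝ) (hε : 0 < ε)
    (hπmeas : Measurable[MeasurableSpace.comap Z inferInstance] π)
    (hπbd : ∀ ω, π ω ∈ Set.Icc ε 1)
    (hηmeas : Measurable[MeasurableSpace.comap Z inferInstance] η)
    (hηint : Integrable η μ)
    -- true nuisance functions: πs = P(A=a|Z) > 0 a.s., ηs = E[Y|A=a,Z]:
    (πs ηs : Ω → ℝ)
    (hπs : πs =ᵐ[μ] μ[ind A a | MeasurableSpace.comap Z inferInstance])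
    (hπspos : ∀ᵐ ω ∂μ, 0 < πs ω)
    (hηsmeas : Measurable[MeasurableSpace.comap Z inferInstance] ηs)
    (hηs : (fun ω => πs ω * ηs ω) =ᵐ[μ]
      μ[fun ω => ind A a ω * Y ω | MeasurableSpace.comap Z inferInstance])
    (hηsint : Integrable ηs μ)
    -- double robustness hypothesis:
    (hcorrect : π =ᵐ[μ] πs ∨ η =ᵐ[μ] ηs) :
    ∫ ω, (ind A a ω * (Y ω - η ω) / π ω + η ω) ∂μ = ∫ ω, ηs ω ∂μ := by
  have hm : MeasurableSpace.comap Z inferInstance ≤ ‹MeasurableSpace Ω› := hZ.comap_le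
  have hπne : ∀ ω, π ω ≠ 0 := fun ω => ne_of_gt (lt_of_lt_of_le hε (hπbd ω).1)
  have hπmeas' : Measurable π := hπmeas.mono hm le_rfl
  have hηmeas' : Measurable η := hηmeas.mono hm le_rfl
  have hind_meas : Measurable (ind A a) := by
    unfold ind
    exact Measurable.ite (hA (MeasurableSet.singleton a)) measurable_const measurable_const
  have hind_bd : ∀ ω, |ind A a ω| ≤ 1 := by
    intro ω; unfold ind; split <;> simp
  -- g = ind * (Y - η)
  set g : Ω → ℝ := fun ω => ind A a ω * (Y ω - η ω) with hg_def
  have hg_int : Integrable g μ := by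
    have := (hY.sub hηint).bdd_mul hind_meas.aestronglyMeasurable (c := 1) (Eventually.of_forall fun ω => ?_)
    · exact this
    · simpa using hind_bd ω
  have hinv_bd : ∀ ω, ‖(π ω)⁻¹‖ ≤ ε⁻¹ := by
    intro ω
    rw [Real.norm_eq_abs, abs_of_pos (inv_pos.2 (lt_of_lt_of_le hε (hπbd ω).1))]
    exact inv_anti₀ hε (hπbd ω).1
  have hinv_meas : Measurable[MeasurableSpace.comap Z inferInstance] (fun ω => (π ω)⁻¹) := hπmeas.inv
  have hinvg_int : Integrable (fun ω => (π ω)⁻¹ * g ω) μ :=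
    hg_int.bdd_mul (hπmeas'.inv).aestronglyMeasurable (c := ε⁻¹) (Eventually.of_forall hinv_bd)
  -- integrable pieces
  have hindY_int : Integrable (fun ω => ind A a ω * Y ω) μ := by
    have := hY.bdd_mul hind_meas.aestronglyMeasurable (c := 1) (Eventually.of_forall fun ω => by simpa using hind_bd ω)
    exact this
  have hindη_int : Integrable (fun ω => ind A a ω * η ω) μ := by
    have := hηint.bdd_mul hind_meas.aestronglyMeasurable (c := 1) (Eventually.of_forall fun ω => by simpa using hind_bd ω)
    exact this
  have hind_int : Integrable (ind A a) μ := by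
    refine (integrable_const (1:ℝ)).mono' hind_meas.aestronglyMeasurable ?_
    exact Eventually.of_forall fun ω => by simpa using hind_bd ω
  -- condExp computations
  have hce1 : μ[fun ω => (π ω)⁻¹ * g ω | MeasurableSpace.comap Z inferInstance] =ᵐ[μ] fun ω => (π ω)⁻¹ * (μ[g|MeasurableSpace.comap Z inferInstance]) ω := by
    have := condExp_mul_of_stronglyMeasurable_left (m := MeasurableSpace.comap Z inferInstance) (hinv_meas.stronglyMeasurable) hinvg_int hg_int
    exact this
  have hceg : μ[g|MeasurableSpace.comap Z inferInstance] =ᵐ[μ] fun ω => πs ω * ηs ω - η ω * πs ω := by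
    have hsplit : g = (fun ω => ind A a ω * Y ω) - (fun ω => η ω * ind A a ω) := by
      funext ω; simp [hg_def]; ring
    rw [hsplit]
    have h1 := condExp_sub (μ := μ) (m := MeasurableSpace.comap Z inferInstance) hindY_int (by simpa [mul_comm] using hindη_int)
    refine h1.trans ?_
    have h2 : μ[fun ω => η ω * ind A a ω | MeasurableSpace.comap Z inferInstance] =ᵐ[μ] fun ω => η ω * (μ[ind A a|MeasurableSpace.comap Z inferInstance]) ω :=
      condExp_mul_of_stronglyMeasurable_left (m := MeasurableSpace.comap Z inferInstance) hηmeas.stronglyMeasurable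
        (by have h : Integrable (fun ω => η ω * ind A a ω) μ := by simpa [mul_comm] using hindη_int
            exact h) hind_int
    filter_upwards [h2, hπs, hηs] with ω h2ω hπsω hηsω
    simp only [Pi.sub_apply]
    rw [h2ω, ← hπsω, ← hηsω]
  -- main rewrite of the integral
  have hsum : (fun ω => ind A a ω * (Y ω - η ω) / π ω + η ω)
      = fun ω => (π ω)⁻¹ * g ω + η ω := by
    funext ω; rw [hg_def]; ring
  rw [hsum, integral_add hinvg_int hηint]
  rw [← integral_condExp hm (f := fun ω => (π ω)⁻¹ * g ω)]
  have hkey : μ[fun ω => (π ω)⁻¹ * g ω | MeasurableSpace.comap Z inferInstance] =ᵐ[μ]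
      fun ω => (π ω)⁻¹ * (πs ω * ηs ω - η ω * πs ω) := by
    filter_upwards [hce1, hceg] with ω h1 h2
    rw [h1, h2]
  rw [integral_congr_ae hkey]
  rcases hcorrect with hc | hc
  · have : (fun ω => (π ω)⁻¹ * (πs ω * ηs ω - η ω * πs ω)) =ᵐ[μ] fun ω => ηs ω - η ω := by
      filter_upwards [hc] with ω hcω
      rw [← hcω, mul_sub, ← mul_assoc, inv_mul_cancel₀ (hπne ω), one_mul, ← mul_assoc,
        mul_comm (π ω)⁻¹ (η ω), mul_assoc, inv_mul_cancel₀ (hπne ω), mul_one]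
    rw [integral_congr_ae this, integral_sub hηsint hηint]
    ring
  · have : (fun ω => (π ω)⁻¹ * (πs ω * ηs ω - η ω * πs ω)) =ᵐ[μ] fun _ => (0:ℝ) := by
      filter_upwards [hc] with ω hcω
      rw [hcω]; ring
    rw [integral_congr_ae this, integral_zero, zero_add, integral_congr_ae hc]
end

section
/- Neyman orthogonality of single-period AIPW: with ψ(π,η) = 1{A=a}(Y − η(Z))/π(Z) + η(Z), the Gateaux derivative of E[ψ(π* + rδπ, η* + rδη)] at r = 0 vanishes for all bounded measurable perturbations δπ, δη (with π* + rδπ bounded away from 0 for small r), where π*(Z) = P(A=a|Z) and η*(Z) = E[Y|A=a,Z]. -/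
open MeasureTheory Filter

/-- The sub-σ-algebra generated by `Z`. -/
abbrev mZ {Ω 𝒵 : Type*} [MeasurableSpace 𝒵] (Z : Ω → 𝒵) : MeasurableSpace Ω :=
  MeasurableSpace.comap Z inferInstance

/-- Neyman orthogonality of single-period AIPW: with
`ψ(π,η) = 1{A=a}(Y − η(Z))/π(Z) + η(Z)`, the Gateaux derivative of
`E[ψ(π* + rδπ, η* + rδη)]` at `r = 0` vanishes for all bounded measurable
perturbations `δπ, δη` (with `π* + rδπ` bounded away from `0` for small `r`),
where `π*(Z) = P(A=a|Z) ∈ [ε,1]` a.s. and `η*(Z) = E[Y|A=a,Z]`. -/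
theorem aipw_neyman_orthogonality
    {Ω 𝒵 : Type*} [MeasurableSpace Ω] [MeasurableSpace 𝒵]
    (μ : Measure Ω) [IsProbabilityMeasure μ]
    (Z : Ω → 𝒵) (A : Ω → Bool) (Y : Ω → ℝ) (a : Bool)
    (hZ : Measurable Z) (hA : Measurable A)
    (hY2 : MemLp Y 2 μ)
    -- true nuisance functions:
    (πs ηs : Ω → ℝ) (ε : ℝ) (hε : 0 < ε)
    (hπs : πs =ᵐ[μ] μ[ind A a | MeasurableSpace.comap Z inferInstance])
    (hπsbd : ∀ᵐ ω ∂μ, πs ω ∈ Set.Icc ε 1)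
    (hηsmeas : Measurable[MeasurableSpace.comap Z inferInstance] ηs)
    (hηs : (fun ω => πs ω * ηs ω) =ᵐ[μ]
      μ[fun ω => ind A a ω * Y ω | MeasurableSpace.comap Z inferInstance])
    (hηsint : MemLp ηs 2 μ)
    -- bounded measurable perturbations:
    (δπ δη : Ω → ℝ) (C : ℝ)
    (hδπmeas : Measurable[MeasurableSpace.comap Z inferInstance] δπ)
    (hδηmeas : Measurable[MeasurableSpace.comap Z inferInstance] δη)
    (hδπbd : ∀ ω, |δπ ω| ≤ C) (hδηbd : ∀ ω, |δη ω| ≤ C)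
    -- the perturbed propensity score stays bounded away from zero for small r:
    (r0 ε' : ℝ) (hr0 : 0 < r0) (hε' : 0 < ε')
    (hstay : ∀ r : ℝ, |r| < r0 → ∀ᵐ ω ∂μ, ε' ≤ πs ω + r * δπ ω) :
    HasDerivAt (fun r : ℝ =>
      ∫ ω, (ind A a ω * (Y ω - (ηs ω + r * δη ω)) / (πs ω + r * δπ ω)
            + (ηs ω + r * δη ω)) ∂μ) 0 0 := by
  classical
  have hm : mZ Z ≤ (inferInstance : MeasurableSpace Ω) := hZ.comap_le
  set π' : Ω → ℝ := μ[ind A a | mZ Z] with hπ'def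
  have hπ'sm : StronglyMeasurable[mZ Z] π' := stronglyMeasurable_condExp
  have hπ'meas : Measurable π' := (hπ'sm.mono hm).measurable
  have hδπm : Measurable δπ := hδπmeas.mono hm le_rfl
  have hδηm : Measurable δη := hδηmeas.mono hm le_rfl
  have hηm : Measurable ηs := hηsmeas.mono hm le_rfl
  have hπs' : πs =ᵐ[μ] π' := hπs
  have hπ'bd : ∀ᵐ ω ∂μ, ε ≤ π' ω ∧ π' ω ≤ 1 := by
    filter_upwards [hπsbd, hπs'] with ω h1 h2
    exact ⟨h2 ▸ h1.1, h2 ▸ h1.2⟩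
  -- C ≥ 0
  have hΩ : Nonempty Ω := by
    by_contra h
    have h1 : (μ Set.univ) = 1 := measure_univ
    rw [Set.univ_eq_empty_iff.2 (not_nonempty_iff.1 h), measure_empty] at h1
    exact zero_ne_one h1
  have hC : 0 ≤ C := (abs_nonneg _).trans (hδπbd (Classical.arbitrary Ω))
  -- basic integrability
  have hYint : Integrable Y μ := hY2.integrable one_le_two
  have hηint : Integrable ηs μ := hηsint.integrable one_le_two
  have hδηint : Integrable δη μ := by
    refine Integrable.mono' (integrable_const C) hδηm.aestronglyMeasurable ?_
    filter_upwards with ω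
    simpa [Real.norm_eq_abs] using hδηbd ω
  have hindmeas : Measurable (ind A a) := by
    unfold ind
    exact Measurable.ite (hA (measurableSet_singleton a)) measurable_const measurable_const
  have hindbd : ∀ ω, |ind A a ω| ≤ 1 := by
    intro ω; unfold ind; split <;> simp
  have hindint : Integrable (ind A a) μ := by
    refine Integrable.mono' (integrable_const 1) hindmeas.aestronglyMeasurable ?_
    filter_upwards with ω
    simpa [Real.norm_eq_abs] using hindbd ω
  have hindYint : Integrable (fun ω => ind A a ω * Y ω) μ := by
    refine Integrable.mono' hYint.abs
      (hindmeas.aestronglyMeasurable.mul hY2.aestronglyMeasurable) ?_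
    filter_upwards with ω
    rw [Real.norm_eq_abs, abs_mul]
    calc |ind A a ω| * |Y ω| ≤ 1 * |Y ω| :=
          mul_le_mul_of_nonneg_right (hindbd ω) (abs_nonneg _)
      _ = |Y ω| := one_mul _
  -- the key formula, valid for all |r| < r0
  have formula : ∀ r : ℝ, |r| < r0 →
      (∫ ω, (ind A a ω * (Y ω - (ηs ω + r * δη ω)) / (πs ω + r * δπ ω)
            + (ηs ω + r * δη ω)) ∂μ)
      = ∫ ω, ηs ω ∂μ + r * ∫ ω, δη ω ∂μ
        - r * ∫ ω, (π' ω + r * δπ ω)⁻¹ * π' ω * δη ω ∂μ := by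
    intro r hr
    set g : Ω → ℝ := fun ω => (π' ω + r * δπ ω)⁻¹ with hg_def
    have hg_sm : StronglyMeasurable[mZ Z] g :=
      ((hπ'sm.measurable.add ((measurable_const (α := ℝ)).mul hδπmeas)).inv).stronglyMeasurable
    have hg_meas : Measurable g := (hg_sm.mono hm).measurable
    have hstay' : ∀ᵐ ω ∂μ, ε' ≤ π' ω + r * δπ ω := by
      filter_upwards [hstay r hr, hπs'] with ω h1 h2
      rw [← h2]; exact h1
    have hg_bd : ∀ᵐ ω ∂μ, |g ω| ≤ ε'⁻¹ := by
      filter_upwards [hstay'] with ω h1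
      have hpos : 0 < π' ω + r * δπ ω := lt_of_lt_of_le hε' h1
      rw [abs_of_pos (inv_pos.2 hpos)]
      exact inv_anti₀ hε' h1
    have hgd : ∀ᵐ ω ∂μ, g ω * (π' ω + r * δπ ω) = 1 := by
      filter_upwards [hstay'] with ω h1
      exact inv_mul_cancel₀ (ne_of_gt (lt_of_lt_of_le hε' h1))
    -- Integrability facts at this r
    have hInt1 : Integrable (g * fun ω => ind A a ω * Y ω) μ := by
      refine Integrable.mono' (hYint.abs.const_mul ε'⁻¹)
        (hg_meas.aestronglyMeasurable.mul
          (hindmeas.aestronglyMeasurable.mul hY2.aestronglyMeasurable)) ?_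
      filter_upwards [hg_bd] with ω h1
      simp only [Pi.mul_apply, Real.norm_eq_abs, abs_mul]
      calc |g ω| * (|ind A a ω| * |Y ω|) ≤ ε'⁻¹ * (1 * |Y ω|) := by
            apply mul_le_mul h1 (mul_le_mul_of_nonneg_right (hindbd ω) (abs_nonneg _))
              (by positivity) (by positivity)
        _ = ε'⁻¹ * |Y ω| := by ring
    have habs : Integrable (fun ω => ε'⁻¹ * (|ηs ω| + |r| * C)) μ := by
      exact ((hηint.abs.add (integrable_const (|r| * C))).const_mul ε'⁻¹)
    have hbd2 : ∀ ω, |ηs ω + r * δη ω| ≤ |ηs ω| + |r| * C := by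
      intro ω
      calc |ηs ω + r * δη ω| ≤ |ηs ω| + |r * δη ω| := abs_add_le _ _
        _ ≤ |ηs ω| + |r| * C := by
            rw [abs_mul]
            exact add_le_add le_rfl (mul_le_mul_of_nonneg_left (hδηbd ω) (abs_nonneg _))
    have hInt2 : Integrable ((fun ω => g ω * (ηs ω + r * δη ω)) * ind A a) μ := by
      refine Integrable.mono' habs
        ((hg_meas.mul (hηm.add (measurable_const.mul hδηm))).aestronglyMeasurable.mul
          hindmeas.aestronglyMeasurable) ?_
      filter_upwards [hg_bd] with ω h1
      simp only [Pi.mul_apply, Real.norm_eq_abs, abs_mul]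
      calc |g ω| * |ηs ω + r * δη ω| * |ind A a ω|
          ≤ ε'⁻¹ * (|ηs ω| + |r| * C) * 1 := by
            apply mul_le_mul (mul_le_mul h1 (hbd2 ω) (abs_nonneg _) (by positivity))
              (hindbd ω) (abs_nonneg _) (by positivity)
        _ = ε'⁻¹ * (|ηs ω| + |r| * C) := mul_one _
    have hπ'abs : ∀ᵐ ω ∂μ, |π' ω| ≤ 1 := by
      filter_upwards [hπ'bd] with ω h
      rw [abs_of_nonneg (le_trans hε.le h.1)]; exact h.2
    have hInt3 : Integrable (fun ω => g ω * (π' ω * ηs ω)) μ := by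
      refine Integrable.mono' (hηint.abs.const_mul ε'⁻¹)
        (hg_meas.aestronglyMeasurable.mul
          (hπ'meas.aestronglyMeasurable.mul hηm.aestronglyMeasurable)) ?_
      filter_upwards [hg_bd, hπ'abs] with ω h1 h2
      simp only [Real.norm_eq_abs, abs_mul]
      calc |g ω| * (|π' ω| * |ηs ω|) ≤ ε'⁻¹ * (1 * |ηs ω|) := by
            apply mul_le_mul h1 (mul_le_mul_of_nonneg_right h2 (abs_nonneg _))
              (by positivity) (by positivity)
        _ = ε'⁻¹ * |ηs ω| := by ring
    have hInt4 : Integrable (fun ω => g ω * (ηs ω + r * δη ω) * π' ω) μ := by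
      refine Integrable.mono' habs
        ((hg_meas.mul (hηm.add (measurable_const.mul hδηm))).aestronglyMeasurable.mul
          hπ'meas.aestronglyMeasurable) ?_
      filter_upwards [hg_bd, hπ'abs] with ω h1 h2
      simp only [Real.norm_eq_abs, abs_mul]
      calc |g ω| * |ηs ω + r * δη ω| * |π' ω|
          ≤ ε'⁻¹ * (|ηs ω| + |r| * C) * 1 := by
            apply mul_le_mul (mul_le_mul h1 (hbd2 ω) (abs_nonneg _) (by positivity))
              h2 (abs_nonneg _) (by positivity)
        _ = ε'⁻¹ * (|ηs ω| + |r| * C) := mul_one _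
    -- pull-out identity 1
    have I1 : ∫ ω, g ω * (ind A a ω * Y ω) ∂μ = ∫ ω, g ω * (π' ω * ηs ω) ∂μ := by
      have h1 := condExp_mul_of_stronglyMeasurable_left (m := mZ Z) (μ := μ) hg_sm hInt1 hindYint
      calc ∫ ω, g ω * (ind A a ω * Y ω) ∂μ
          = ∫ ω, (g * fun ω => ind A a ω * Y ω) ω ∂μ := rfl
        _ = ∫ ω, (μ[(g * fun ω => ind A a ω * Y ω)|mZ Z]) ω ∂μ := (integral_condExp hm).symm
        _ = ∫ ω, (g * μ[fun ω => ind A a ω * Y ω|mZ Z]) ω ∂μ := integral_congr_ae h1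
        _ = ∫ ω, g ω * (π' ω * ηs ω) ∂μ := by
            refine integral_congr_ae ?_
            filter_upwards [hηs, hπs'] with ω h2 h3
            simp only [Pi.mul_apply]
            rw [← h2, ← h3]
    -- pull-out identity 2
    have I2 : ∫ ω, g ω * (ηs ω + r * δη ω) * ind A a ω ∂μ
        = ∫ ω, g ω * (ηs ω + r * δη ω) * π' ω ∂μ := by
      have hf_sm : StronglyMeasurable[mZ Z] (fun ω => g ω * (ηs ω + r * δη ω)) :=
        (hg_sm.measurable.mul (hηsmeas.add (measurable_const.mul hδηmeas))).stronglyMeasurable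
      have h1 := condExp_mul_of_stronglyMeasurable_left (m := mZ Z) (μ := μ) hf_sm hInt2 hindint
      calc ∫ ω, g ω * (ηs ω + r * δη ω) * ind A a ω ∂μ
          = ∫ ω, ((fun ω => g ω * (ηs ω + r * δη ω)) * ind A a) ω ∂μ := rfl
        _ = ∫ ω, (μ[(fun ω => g ω * (ηs ω + r * δη ω)) * ind A a|mZ Z]) ω ∂μ :=
            (integral_condExp hm).symm
        _ = ∫ ω, ((fun ω => g ω * (ηs ω + r * δη ω)) * μ[ind A a|mZ Z]) ω ∂μ :=
            integral_congr_ae h1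
        _ = ∫ ω, g ω * (ηs ω + r * δη ω) * π' ω ∂μ := rfl
    -- the first part of the integrand, with πs replaced by π'
    have hsplit : ∀ ω, ind A a ω * (Y ω - (ηs ω + r * δη ω)) / (π' ω + r * δπ ω)
        = (g * fun ω => ind A a ω * Y ω) ω
          - ((fun ω => g ω * (ηs ω + r * δη ω)) * ind A a) ω := by
      intro ω
      simp only [Pi.mul_apply, hg_def, div_eq_mul_inv]
      ring
    have E1 : ∫ ω, ind A a ω * (Y ω - (ηs ω + r * δη ω)) / (π' ω + r * δπ ω) ∂μ
        = -(r * ∫ ω, g ω * π' ω * δη ω ∂μ) := by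
      have hIntδ : Integrable (fun ω => g ω * π' ω * δη ω) μ := by
        refine Integrable.mono' (integrable_const (ε'⁻¹ * C))
          ((hg_meas.mul hπ'meas).mul hδηm).aestronglyMeasurable ?_
        filter_upwards [hg_bd, hπ'abs] with ω h1 h2
        simp only [Real.norm_eq_abs, abs_mul]
        calc |g ω| * |π' ω| * |δη ω| ≤ ε'⁻¹ * 1 * C := by
              apply mul_le_mul (mul_le_mul h1 h2 (abs_nonneg _) (by positivity))
                (hδηbd ω) (abs_nonneg _) (by positivity)
          _ = ε'⁻¹ * C := by ring
      calc ∫ ω, ind A a ω * (Y ω - (ηs ω + r * δη ω)) / (π' ω + r * δπ ω) ∂μ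
          = ∫ ω, ((g * fun ω => ind A a ω * Y ω) ω
              - ((fun ω => g ω * (ηs ω + r * δη ω)) * ind A a) ω) ∂μ := by
            exact integral_congr_ae (Filter.Eventually.of_forall hsplit)
        _ = (∫ ω, (g * fun ω => ind A a ω * Y ω) ω ∂μ)
              - ∫ ω, ((fun ω => g ω * (ηs ω + r * δη ω)) * ind A a) ω ∂μ :=
            integral_sub hInt1 hInt2
        _ = (∫ ω, g ω * (ind A a ω * Y ω) ∂μ)
              - ∫ ω, g ω * (ηs ω + r * δη ω) * ind A a ω ∂μ := by
            simp only [Pi.mul_apply]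
        _ = (∫ ω, g ω * (π' ω * ηs ω) ∂μ) - ∫ ω, g ω * (ηs ω + r * δη ω) * π' ω ∂μ := by
            rw [I1, I2]
        _ = ∫ ω, (g ω * (π' ω * ηs ω) - g ω * (ηs ω + r * δη ω) * π' ω) ∂μ :=
            (integral_sub hInt3 hInt4).symm
        _ = ∫ ω, (-r) * (g ω * π' ω * δη ω) ∂μ := by
            refine integral_congr_ae (Filter.Eventually.of_forall fun ω => ?_)
            ring
        _ = (-r) * ∫ ω, g ω * π' ω * δη ω ∂μ := integral_const_mul _ _
        _ = -(r * ∫ ω, g ω * π' ω * δη ω ∂μ) := by ring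
    -- now assemble
    have hIntLHS1 : Integrable
        (fun ω => ind A a ω * (Y ω - (ηs ω + r * δη ω)) / (π' ω + r * δπ ω)) μ := by
      have := hInt1.sub hInt2
      refine this.congr ?_
      exact Filter.Eventually.of_forall fun ω => (hsplit ω).symm
    have hIntLHS2 : Integrable (fun ω => ηs ω + r * δη ω) μ :=
      hηint.add (hδηint.const_mul r)
    calc (∫ ω, (ind A a ω * (Y ω - (ηs ω + r * δη ω)) / (πs ω + r * δπ ω)
            + (ηs ω + r * δη ω)) ∂μ)
        = ∫ ω, (ind A a ω * (Y ω - (ηs ω + r * δη ω)) / (π' ω + r * δπ ω)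
            + (ηs ω + r * δη ω)) ∂μ := by
          refine integral_congr_ae ?_
          filter_upwards [hπs'] with ω h
          rw [h]
      _ = (∫ ω, ind A a ω * (Y ω - (ηs ω + r * δη ω)) / (π' ω + r * δπ ω) ∂μ)
            + ∫ ω, (ηs ω + r * δη ω) ∂μ := integral_add hIntLHS1 hIntLHS2
      _ = -(r * ∫ ω, g ω * π' ω * δη ω ∂μ)
            + ((∫ ω, ηs ω ∂μ) + r * ∫ ω, δη ω ∂μ) := by
          rw [E1, integral_add hηint (hδηint.const_mul r), integral_const_mul]
      _ = ∫ ω, ηs ω ∂μ + r * ∫ ω, δη ω ∂μ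
            - r * ∫ ω, (π' ω + r * δπ ω)⁻¹ * π' ω * δη ω ∂μ := by
          simp only [hg_def]; ring
  -- quadratic bound
  have key : ∀ r : ℝ, |r| < r0 →
      |(∫ ω, (ind A a ω * (Y ω - (ηs ω + r * δη ω)) / (πs ω + r * δπ ω)
            + (ηs ω + r * δη ω)) ∂μ)
        - (∫ ω, (ind A a ω * (Y ω - (ηs ω + (0:ℝ) * δη ω)) / (πs ω + (0:ℝ) * δπ ω)
            + (ηs ω + (0:ℝ) * δη ω)) ∂μ)| ≤ (C ^ 2 / ε') * r ^ 2 := by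
    intro r hr
    have h0 : |(0:ℝ)| < r0 := by simpa using hr0
    rw [formula r hr, formula 0 h0]
    have hzero : ∀ x : Ω, (π' x + (0:ℝ) * δπ x)⁻¹ * π' x * δη x
        = (π' x + (0:ℝ) * δπ x)⁻¹ * π' x * δη x := fun _ => rfl
    simp only [zero_mul, add_zero, mul_zero, sub_zero]
    -- remaining: |r * ∫ δη - r * ∫ (π'+rδπ)⁻¹ π' δη| ≤ C²/ε' r²
    have hstay' : ∀ᵐ ω ∂μ, ε' ≤ π' ω + r * δπ ω := by
      filter_upwards [hstay r hr, hπs'] with ω h1 h2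
      rw [← h2]; exact h1
    have hdiff : |(∫ ω, δη ω ∂μ) - ∫ ω, (π' ω + r * δπ ω)⁻¹ * π' ω * δη ω ∂μ|
        ≤ C * (|r| * C / ε') := by
      have hIntδ : Integrable (fun ω => (π' ω + r * δπ ω)⁻¹ * π' ω * δη ω) μ := by
        refine Integrable.mono' (integrable_const (ε'⁻¹ * C))
          (((hπ'meas.add (measurable_const.mul hδπm)).inv.mul hπ'meas).mul
            hδηm).aestronglyMeasurable ?_
        filter_upwards [hstay', hπ'bd] with ω h1 h2
        have hpos : 0 < π' ω + r * δπ ω := lt_of_lt_of_le hε' h1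
        simp only [Real.norm_eq_abs, abs_mul]
        have hg1 : |(π' ω + r * δπ ω)⁻¹| ≤ ε'⁻¹ := by
          rw [abs_of_pos (inv_pos.2 hpos)]
          exact inv_anti₀ hε' h1
        have hπ1 : |π' ω| ≤ 1 := by
          rw [abs_of_nonneg (le_trans hε.le h2.1)]; exact h2.2
        calc |(π' ω + r * δπ ω)⁻¹| * |π' ω| * |δη ω| ≤ ε'⁻¹ * 1 * C := by
              apply mul_le_mul (mul_le_mul hg1 hπ1 (abs_nonneg _) (by positivity))
                (hδηbd ω) (abs_nonneg _) (by positivity)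
          _ = ε'⁻¹ * C := by ring
      have hpt : ∀ᵐ ω ∂μ, ‖δη ω - (π' ω + r * δπ ω)⁻¹ * π' ω * δη ω‖ ≤ C * (|r| * C / ε') := by
        filter_upwards [hstay', hπ'bd] with ω h1 h2
        have hpos : 0 < π' ω + r * δπ ω := lt_of_lt_of_le hε' h1
        have heq : δη ω - (π' ω + r * δπ ω)⁻¹ * π' ω * δη ω
            = δη ω * ((π' ω + r * δπ ω)⁻¹ * (r * δπ ω)) := by
          have hne : π' ω + r * δπ ω ≠ 0 := ne_of_gt hpos
          field_simp
          ring
        rw [Real.norm_eq_abs, heq, abs_mul, abs_mul, abs_mul]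
        have hg1 : |(π' ω + r * δπ ω)⁻¹| ≤ ε'⁻¹ := by
          rw [abs_of_pos (inv_pos.2 hpos)]
          exact inv_anti₀ hε' h1
        calc |δη ω| * (|(π' ω + r * δπ ω)⁻¹| * (|r| * |δπ ω|))
            ≤ C * (ε'⁻¹ * (|r| * C)) := by
              apply mul_le_mul (hδηbd ω) _ (by positivity) hC
              apply mul_le_mul hg1 (mul_le_mul_of_nonneg_left (hδπbd ω) (abs_nonneg _))
                (by positivity) (by positivity)
          _ = C * (|r| * C / ε') := by ring
      rw [← integral_sub hδηint hIntδ, ← Real.norm_eq_abs]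
      calc ‖∫ ω, (δη ω - (π' ω + r * δπ ω)⁻¹ * π' ω * δη ω) ∂μ‖
          ≤ ∫ _, C * (|r| * C / ε') ∂μ :=
            norm_integral_le_of_norm_le (integrable_const _) hpt
        _ = C * (|r| * C / ε') := by simp
    calc |(∫ ω, ηs ω ∂μ) + r * ∫ ω, δη ω ∂μ
          - r * (∫ ω, (π' ω + r * δπ ω)⁻¹ * π' ω * δη ω ∂μ) - ∫ ω, ηs ω ∂μ|
        = |r| * |(∫ ω, δη ω ∂μ) - ∫ ω, (π' ω + r * δπ ω)⁻¹ * π' ω * δη ω ∂μ| := by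
          rw [← abs_mul]
          congr 1
          ring
      _ ≤ |r| * (C * (|r| * C / ε')) :=
          mul_le_mul_of_nonneg_left hdiff (abs_nonneg _)
      _ = (C ^ 2 / ε') * (|r| * |r|) := by ring
      _ = (C ^ 2 / ε') * r ^ 2 := by rw [← abs_mul, abs_mul_self]; ring
  -- conclude via little-o
  rw [hasDerivAt_iff_isLittleO]
  have hev : ∀ᶠ r in nhds (0:ℝ), |r| < r0 := by
    simpa using eventually_abs_sub_lt (0:ℝ) hr0
  have hbig : (fun r : ℝ =>
      (∫ ω, (ind A a ω * (Y ω - (ηs ω + r * δη ω)) / (πs ω + r * δπ ω)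
            + (ηs ω + r * δη ω)) ∂μ)
      - (∫ ω, (ind A a ω * (Y ω - (ηs ω + (0:ℝ) * δη ω)) / (πs ω + (0:ℝ) * δπ ω)
            + (ηs ω + (0:ℝ) * δη ω)) ∂μ)) =O[nhds (0:ℝ)] fun r => r ^ 2 := by
    refine Asymptotics.IsBigO.of_bound (C ^ 2 / ε') ?_
    filter_upwards [hev] with r hr
    rw [Real.norm_eq_abs, Real.norm_eq_abs, abs_of_nonneg (sq_nonneg r)]
    exact key r hr
  have hlit := hbig.trans_isLittleO (Asymptotics.isLittleO_pow_id (𝕜 := ℝ) one_lt_two)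
  simpa using hlit
end
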